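/- arXiv:2102.02953 — 4 statements merged into one kernel-verified Lean document; each statement's English description precedes it below -/
import Mathlib

section
/- (Extended fundamental lemma, first part.) Let (u^i, x^i, y^i), i = 1,...,τ, be input-state-output trajectories of x_{t+1} = A x_t + B u_t of lengths T^i. If the inputs {u^i} are collectively persistently exciting of order δ + L with δ ≥ deg(minimal polynomial of A), then the column span of the stacked matrix [H_1(x^1_{[0,T^1-L]}) ... H_1(x^τ_{[0,T^τ-L]}); H_L(u^1_{[0,T^1-1]}) ... H_L(u^τ_{[0,T^τ-1]})] equals (R + K[x_0^1, ..., x_0^τ]) × ℝ^{mL}, where R is the controllable subspace and K[x_0^1,...,x_0^τ] is the smallest A-invariant subspace containing the initial states. -/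
open Matrix Finset

lemma aux_pow_mem {n : ℕ} (A : Matrix (Fin n) (Fin n) ℝ) {N : ℕ}
    (hN0 : 0 < N) (hN : (minpoly ℝ A).natDegree ≤ N) (p : ℕ) :
    A ^ p ∈ Submodule.span ℝ (Set.range fun j : Fin N => A ^ (j : ℕ)) := by
  induction p using Nat.strong_induction_on with
  | _ p ih =>
    by_cases hp : p < N
    · exact Submodule.subset_span ⟨⟨p, hp⟩, rfl⟩
    push_neg at hp
    have hint : IsIntegral ℝ A := Matrix.isIntegral A
    have hmon : (minpoly ℝ A).Monic := minpoly.monic hint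
    set q := minpoly ℝ A with hq
    set d := q.natDegree with hd
    have haev : Polynomial.aeval A q = 0 := minpoly.aeval ℝ A
    by_cases hd0 : d = 0
    · have hq1 : q = 1 := hmon.natDegree_eq_zero.mp hd0
      have h10 : (1 : Matrix (Fin n) (Fin n) ℝ) = 0 := by
        have := haev; rw [hq1] at this; simpa using this
      have : A ^ p = 0 := by
        calc A ^ p = A ^ p * 1 := (mul_one _).symm
        _ = 0 := by rw [h10, mul_zero]
      rw [this]; exact Submodule.zero_mem _
    · have hd1 : 1 ≤ d := Nat.one_le_iff_ne_zero.mpr hd0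
      have hsum : Polynomial.aeval A q = ∑ i ∈ Finset.range (d + 1), q.coeff i • A ^ i :=
        Polynomial.aeval_eq_sum_range A
      have hAd : A ^ d = -∑ i ∈ Finset.range d, q.coeff i • A ^ i := by
        have h2 : (0 : Matrix (Fin n) (Fin n) ℝ)
            = (∑ i ∈ Finset.range d, q.coeff i • A ^ i) + q.coeff d • A ^ d := by
          rw [← haev, hsum, Finset.sum_range_succ]
        rw [hmon.coeff_natDegree, one_smul] at h2
        exact eq_neg_of_add_eq_zero_right h2.symm
      have hdp : d ≤ p := le_trans hN hp
      have hAp : A ^ p = -∑ i ∈ Finset.range d, q.coeff i • A ^ (p - d + i) := by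
        have : A ^ p = A ^ (p - d) * A ^ d := by
          rw [← pow_add]; congr 1; omega
        rw [this, hAd, mul_neg, Finset.mul_sum]
        congr 1
        refine Finset.sum_congr rfl fun i _ => ?_
        rw [Matrix.mul_smul, ← pow_add]
      rw [hAp]
      refine Submodule.neg_mem _ (Submodule.sum_mem _ fun i hi => Submodule.smul_mem _ _ ?_)
      exact ih _ (by simp at hi; omega)

lemma aux_pow_coeff {n : ℕ} (A : Matrix (Fin n) (Fin n) ℝ) {N : ℕ}
    (hN0 : 0 < N) (hN : (minpoly ℝ A).natDegree ≤ N) (p : ℕ) :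
    ∃ b : Fin N → ℝ, ∑ j : Fin N, b j • A ^ (j : ℕ) = A ^ p :=
  Submodule.mem_span_range_iff_exists_fun ℝ |>.mp (aux_pow_mem A hN0 hN p)

lemma aux_pow_mulVec {n : ℕ} (A : Matrix (Fin n) (Fin n) ℝ) {N : ℕ}
    (hN0 : 0 < N) (hN : (minpoly ℝ A).natDegree ≤ N) (p : ℕ) :
    ∃ b : Fin N → ℝ, ∀ w : Fin n → ℝ,
      (A ^ p).mulVec w = ∑ j : Fin N, b j • (A ^ (j : ℕ)).mulVec w := by
  obtain ⟨b, hb⟩ := aux_pow_coeff A hN0 hN p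
  refine ⟨b, fun w => ?_⟩
  rw [← hb]
  rw [show ((∑ j : Fin N, b j • A ^ (j:ℕ)).mulVec w) = ∑ j : Fin N, (b j • A ^ (j:ℕ)).mulVec w from ?_]
  · exact Finset.sum_congr rfl fun j _ => Matrix.smul_mulVec _ _ _
  · induction (Finset.univ : Finset (Fin N)) using Finset.induction with
    | empty => simp [Matrix.mulVec_zero, Matrix.zero_mulVec]
    | insert h ih => simp_all [Matrix.add_mulVec]

lemma aux_sum_dotProduct {ι : Type*} (s : Finset ι) {m : ℕ} (f : ι → Fin m → ℝ) (v : Fin m → ℝ) :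
    (∑ j ∈ s, f j) ⬝ᵥ v = ∑ j ∈ s, f j ⬝ᵥ v := by
  simp only [dotProduct, Finset.sum_apply, Finset.sum_mul]
  exact Finset.sum_comm

lemma aux_mulVec_pow_mem {n : ℕ} (A : Matrix (Fin n) (Fin n) ℝ) (w : Fin n → ℝ) (p : ℕ) :
    (A ^ p).mulVec w ∈ Submodule.span ℝ {v : Fin n → ℝ | ∃ j < n, v = (A ^ j).mulVec w} := by
  rcases Nat.eq_zero_or_pos n with hn | hn
  · subst hn
    have : (A ^ p).mulVec w = 0 := Subsingleton.elim _ _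
    rw [this]; exact Submodule.zero_mem _
  · have hdeg : (minpoly ℝ A).natDegree ≤ n := by
      have h1 : minpoly ℝ A ∣ A.charpoly := A.minpoly_dvd_charpoly
      have h3 : A.charpoly ≠ 0 := A.charpoly_monic.ne_zero
      calc (minpoly ℝ A).natDegree ≤ A.charpoly.natDegree := Polynomial.natDegree_le_of_dvd h1 h3
      _ = n := by rw [A.charpoly_natDegree_eq_dim, Fintype.card_fin]
    obtain ⟨b, hb⟩ := aux_pow_mulVec A hn hdeg p
    rw [hb w]
    exact Submodule.sum_mem _ fun j _ => Submodule.smul_mem _ _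
      (Submodule.subset_span ⟨(j : ℕ), j.2, rfl⟩)

/-- extended fundamental lemma, first part: under collective
persistency of excitation of order δ + L with δ ≥ deg(minpoly A), the column
span of the stacked state/input mosaic-Hankel matrix equals
(R + K[x₀¹,...,x₀^τ]) × ℝ^{mL}. -/
theorem extended_fundamental_lemma_part_one
    (n m L δ τ : ℕ) (hL : 0 < L) (hδpos : 0 < δ)
    (A : Matrix (Fin n) (Fin n) ℝ) (B : Matrix (Fin n) (Fin m) ℝ)
    (T : Fin τ → ℕ)
    (u : Fin τ → ℕ → Fin m → ℝ) (x : Fin τ → ℕ → Fin n → ℝ)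
    (hdyn : ∀ i t, t + 1 < T i →
      x i (t + 1) = A.mulVec (x i t) + B.mulVec (u i t))
    (hδ : (minpoly ℝ A).natDegree ≤ δ)
    (hlen : ∀ i, δ + L ≤ T i)
    -- collective persistency of excitation of order δ + L:
    -- the mosaic-Hankel matrix of depth δ + L has trivial left kernel
    (hpe : ∀ ξ : Fin (δ + L) → Fin m → ℝ,
      (∀ i : Fin τ, ∀ c : ℕ, c + (δ + L) ≤ T i →
        ∑ k : Fin (δ + L), ξ k ⬝ᵥ u i (c + k) = 0) → ξ = 0) :
    Submodule.span ℝ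
      {v : (Fin n → ℝ) × (Fin L → Fin m → ℝ) | ∃ i : Fin τ, ∃ c : ℕ,
        c + L ≤ T i ∧ v = (x i c, fun k : Fin L => u i (c + (k : ℕ)))} =
    Submodule.prod
      ((Submodule.span ℝ {v : Fin n → ℝ | ∃ j < n, ∃ i : Fin m,
          v = (A ^ j).mulVec (fun k => B k i)}) ⊔
       (Submodule.span ℝ {v : Fin n → ℝ | ∃ j < n, ∃ i : Fin τ,
          v = (A ^ j).mulVec (x i 0)}))
      (⊤ : Submodule ℝ (Fin L → Fin m → ℝ)) := by
  classical
  set RS := Submodule.span ℝ {v : Fin n → ℝ | ∃ j < n, ∃ i : Fin m,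
      v = (A ^ j).mulVec (fun k => B k i)} with hRS
  set KS := Submodule.span ℝ {v : Fin n → ℝ | ∃ j < n, ∃ i : Fin τ,
      v = (A ^ j).mulVec (x i 0)} with hKS
  apply le_antisymm
  · -- easy direction
    rw [Submodule.span_le]
    rintro v ⟨i, c, hc, rfl⟩
    refine Submodule.mem_prod.mpr ⟨?_, trivial⟩
    rcases Nat.eq_zero_or_pos n with hn | hn
    · subst hn
      have : x i c = 0 := Subsingleton.elim _ _
      rw [this]; exact zero_mem _
    have hBmem : ∀ uu : Fin m → ℝ, B.mulVec uu ∈ RS ⊔ KS := by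
      intro uu
      have hbv : B.mulVec uu = ∑ i' : Fin m, uu i' • (fun k => B k i') := by
        ext k
        simp [Matrix.mulVec, dotProduct, Finset.sum_apply, mul_comm]
      rw [hbv]
      refine Submodule.sum_mem _ fun i' _ => Submodule.smul_mem _ _
        (Submodule.mem_sup_left (Submodule.subset_span ⟨0, hn, i', by
          simp [Matrix.one_mulVec]⟩))
    have hAinv : ∀ v ∈ RS ⊔ KS, A.mulVec v ∈ RS ⊔ KS := by
      have hsub : RS ⊔ KS ≤ Submodule.comap A.mulVecLin (RS ⊔ KS) := by
        refine sup_le ?_ ?_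
        · rw [hRS, Submodule.span_le]
          rintro w ⟨j, hj, i', rfl⟩
          simp only [SetLike.mem_coe, Submodule.mem_comap, Matrix.mulVecLin_apply]
          rw [Matrix.mulVec_mulVec, ← pow_succ']
          refine Submodule.mem_sup_left (Submodule.span_mono ?_
            (aux_mulVec_pow_mem A (fun k => B k i') (j + 1)))
          rintro v ⟨j', hj', rfl⟩
          exact ⟨j', hj', i', rfl⟩
        · rw [hKS, Submodule.span_le]
          rintro w ⟨j, hj, i0, rfl⟩
          simp only [SetLike.mem_coe, Submodule.mem_comap, Matrix.mulVecLin_apply]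
          rw [Matrix.mulVec_mulVec, ← pow_succ']
          refine Submodule.mem_sup_right (Submodule.span_mono ?_
            (aux_mulVec_pow_mem A (x i0 0) (j + 1)))
          rintro v ⟨j', hj', rfl⟩
          exact ⟨j', hj', i0, rfl⟩
      intro v hv
      have := hsub hv
      simpa [Submodule.mem_comap, Matrix.mulVecLin_apply] using this
    have hxmem : ∀ t, t < T i → x i t ∈ RS ⊔ KS := by
      intro t
      induction t with
      | zero =>
        intro _
        exact Submodule.mem_sup_right (Submodule.subset_span ⟨0, hn, i, by
          simp [Matrix.one_mulVec]⟩)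
      | succ t ih =>
        intro ht
        rw [hdyn i t ht]
        exact Submodule.add_mem _ (hAinv _ (ih (by omega))) (hBmem _)
    exact hxmem c (by omega)
  · -- hard direction
    rw [← Subspace.dualAnnihilator_le_dualAnnihilator_iff]
    intro φ hφ
    rw [Submodule.mem_dualAnnihilator] at hφ ⊢
    have hgen : ∀ (i : Fin τ) (c : ℕ), c + L ≤ T i →
        φ (x i c, fun k : Fin L => u i (c + (k : ℕ))) = 0 := fun i c hc =>
      hφ _ (Submodule.subset_span ⟨i, c, hc, rfl⟩)
    set η : (Fin n → ℝ) →ₗ[ℝ] ℝ := φ ∘ₗ LinearMap.inl ℝ _ _ with hηdef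
    set ζ : (Fin L → Fin m → ℝ) →ₗ[ℝ] ℝ := φ ∘ₗ LinearMap.inr ℝ _ _ with hζdef
    have hφsplit : ∀ a b, φ (a, b) = η a + ζ b := by
      intro a b
      have h1 : ((a, b) : (Fin n → ℝ) × (Fin L → Fin m → ℝ)) = (a, 0) + (0, b) := by simp
      rw [h1, map_add]; rfl
    set ξv : Fin L → Fin m → ℝ :=
      fun k i' => ζ (Pi.single k (fun j => if i' = j then 1 else 0)) with hξv
    have hζapp : ∀ b : Fin L → Fin m → ℝ, ζ b = ∑ k : Fin L, ξv k ⬝ᵥ b k := by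
      intro b
      have hb : b = ∑ k : Fin L, Pi.single k (b k) := by
        funext i''
        rw [Finset.sum_apply]
        exact (Fintype.sum_pi_single i'' b).symm
      rw [show ζ b = ζ (∑ k : Fin L, Pi.single k (b k)) from by rw [← hb], map_sum]
      refine Finset.sum_congr rfl fun k _ => ?_
      have hthis := LinearMap.pi_apply_eq_sum_univ
        (ζ ∘ₗ LinearMap.single ℝ (fun _ : Fin L => Fin m → ℝ) k) (b k)
      simp only [LinearMap.comp_apply, LinearMap.coe_single] at hthis
      rw [hthis]
      simp [hξv, dotProduct, mul_comm]
    set g : ℕ → Fin m → ℝ := fun j i' => η ((A ^ j).mulVec (fun k => B k i')) with hg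
    have hgB : ∀ (j : ℕ) (w : Fin m → ℝ), η ((A ^ j).mulVec (B.mulVec w)) = g j ⬝ᵥ w := by
      intro j w
      have hw : B.mulVec w = ∑ i' : Fin m, w i' • (fun k => B k i') := by
        ext k; simp [Matrix.mulVec, dotProduct, Finset.sum_apply, mul_comm]
      have hsum : (A ^ j).mulVec (B.mulVec w)
          = ∑ i' : Fin m, w i' • (A ^ j).mulVec (fun k => B k i') := by
        rw [hw, ← Matrix.mulVecLin_apply, map_sum]
        simp [Matrix.mulVecLin_apply]
      rw [hsum, map_sum]
      simp only [_root_.map_smul, smul_eq_mul]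
      simp [hg, dotProduct, mul_comm]
    have hstep : ∀ (i : Fin τ) (c p : ℕ), c + p < T i →
        x i (c + p) = (A ^ p).mulVec (x i c)
          + ∑ t ∈ Finset.range p, (A ^ (p - 1 - t)).mulVec (B.mulVec (u i (c + t))) := by
      intro i c p
      induction p with
      | zero => intro _; simp [Matrix.one_mulVec]
      | succ p ih =>
        intro hp
        have hcp : c + p < T i := by omega
        have hdx : x i (c + (p + 1)) = A.mulVec (x i (c + p)) + B.mulVec (u i (c + p)) := by
          have := hdyn i (c + p) (by omega)
          rw [show c + (p + 1) = (c + p) + 1 from by omega]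
          exact this
        rw [hdx, ih hcp, Matrix.mulVec_add, Matrix.mulVec_mulVec, ← pow_succ']
        rw [show A.mulVec (∑ t ∈ Finset.range p, (A ^ (p - 1 - t)).mulVec (B.mulVec (u i (c + t))))
            = ∑ t ∈ Finset.range p, (A ^ (p - t)).mulVec (B.mulVec (u i (c + t))) from ?_]
        · rw [Finset.sum_range_succ, Nat.add_sub_cancel, Nat.sub_self, pow_zero,
            Matrix.one_mulVec]
          abel
        · rw [← Matrix.mulVecLin_apply, map_sum]
          refine Finset.sum_congr rfl fun t ht => ?_
          simp only [Finset.mem_range] at ht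
          rw [Matrix.mulVecLin_apply, Matrix.mulVec_mulVec, ← pow_succ',
            show p - 1 - t + 1 = p - t from by omega]
    have heta : ∀ (i : Fin τ) (c p : ℕ), c + p < T i →
        η (x i (c + p)) = η ((A ^ p).mulVec (x i c))
          + ∑ t ∈ Finset.range p, g (p - 1 - t) ⬝ᵥ u i (c + t) := by
      intro i c p hp
      rw [hstep i c p hp, map_add, map_sum]
      congr 1
      exact Finset.sum_congr rfl fun t _ => hgB _ _
    have h0 : ∀ (i : Fin τ) (c : ℕ), c + L ≤ T i →
        η (x i c) = - ∑ k : Fin L, ξv k ⬝ᵥ u i (c + (k : ℕ)) := by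
      intro i c hc
      have h := hgen i c hc
      rw [hφsplit, hζapp] at h
      exact eq_neg_of_add_eq_zero_left h
    have hE : ∀ (i : Fin τ) (c j : ℕ), j ≤ δ → c + (δ + L) ≤ T i →
        η ((A ^ j).mulVec (x i c)) =
          - (∑ k : Fin L, ξv k ⬝ᵥ u i (c + j + (k : ℕ)))
          - ∑ t ∈ Finset.range j, g (j - 1 - t) ⬝ᵥ u i (c + t) := by
      intro i c j hj hc
      have h1 := heta i c j (by omega)
      have h2 := h0 i (c + j) (by omega)
      rw [h2] at h1
      linarith [h1]
    obtain ⟨a, ha⟩ := aux_pow_mulVec A hδpos hδ δ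
    set ξN : ℕ → Fin m → ℝ := fun k => if h : k < L then ξv ⟨k, h⟩ else 0 with hξN
    set W : ℕ → ℕ → Fin m → ℝ := fun j s =>
      (if j ≤ s ∧ s < j + L then ξN (s - j) else 0) +
      (if s < j then g (j - 1 - s) else 0) with hW
    have hWsum : ∀ (i : Fin τ) (c j : ℕ), j ≤ δ →
        ∑ s ∈ Finset.range (δ + L), W j s ⬝ᵥ u i (c + s)
          = (∑ k : Fin L, ξv k ⬝ᵥ u i (c + j + (k : ℕ)))
            + ∑ t ∈ Finset.range j, g (j - 1 - t) ⬝ᵥ u i (c + t) := by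
      intro i c j hj
      have hsplit : ∀ s, W j s ⬝ᵥ u i (c + s)
          = (if j ≤ s ∧ s < j + L then ξN (s - j) ⬝ᵥ u i (c + s) else 0)
          + (if s < j then g (j - 1 - s) ⬝ᵥ u i (c + s) else 0) := by
        intro s
        simp only [hW, add_dotProduct]
        congr 1 <;> (split_ifs <;> simp)
      rw [Finset.sum_congr rfl fun s _ => hsplit s, Finset.sum_add_distrib]
      congr 1
      · rw [← Finset.sum_filter]
        have hfil : (Finset.range (δ + L)).filter (fun s => j ≤ s ∧ s < j + L)
            = Finset.Ico j (j + L) := by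
          ext s
          simp only [Finset.mem_filter, Finset.mem_range, Finset.mem_Ico]
          omega
        rw [hfil, Finset.sum_Ico_eq_sum_range, show j + L - j = L from by omega]
        rw [← Fin.sum_univ_eq_sum_range (fun k => ξN ((j + k) - j) ⬝ᵥ u i (c + (j + k))) L]
        refine Finset.sum_congr rfl fun k _ => ?_
        rw [show (j + (k : ℕ)) - j = (k : ℕ) from by omega,
          show c + (j + (k : ℕ)) = c + j + (k : ℕ) from by omega]
        congr 1
        simp [hξN]
      · rw [← Finset.sum_filter]
        have hfil : (Finset.range (δ + L)).filter (fun s => s < j) = Finset.range j := by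
          ext s
          simp only [Finset.mem_filter, Finset.mem_range]
          omega
        rw [hfil]
    set ζtot : ℕ → Fin m → ℝ := fun s => W δ s - ∑ j : Fin δ, a j • W (j : ℕ) s with hζt
    have hζ0 : ∀ s, s < δ + L → ζtot s = 0 := by
      have hmain : (fun s : Fin (δ + L) => ζtot (s : ℕ)) = 0 := by
        apply hpe
        intro i c hc
        have hWj : ∀ j : ℕ, j ≤ δ → ∑ s ∈ Finset.range (δ + L), W j s ⬝ᵥ u i (c + s)
            = - η ((A ^ j).mulVec (x i c)) := by
          intro j hjle
          rw [hWsum i c j hjle, hE i c j hjle hc]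
          ring
        have hsub : ∀ s, ζtot s ⬝ᵥ u i (c + s)
            = W δ s ⬝ᵥ u i (c + s) - ∑ j : Fin δ, a j * (W (j : ℕ) s ⬝ᵥ u i (c + s)) := by
          intro s
          simp only [hζt, sub_dotProduct]
          congr 1
          rw [aux_sum_dotProduct]
          exact Finset.sum_congr rfl fun j _ => smul_dotProduct _ _ _
        calc ∑ k : Fin (δ + L), (fun s : Fin (δ + L) => ζtot (s : ℕ)) k ⬝ᵥ u i (c + (k : ℕ))
            = ∑ s ∈ Finset.range (δ + L), ζtot s ⬝ᵥ u i (c + s) :=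
              Fin.sum_univ_eq_sum_range (fun s => ζtot s ⬝ᵥ u i (c + s)) (δ + L)
          _ = ∑ s ∈ Finset.range (δ + L), (W δ s ⬝ᵥ u i (c + s)
                - ∑ j : Fin δ, a j * (W (j : ℕ) s ⬝ᵥ u i (c + s))) :=
              Finset.sum_congr rfl fun s _ => hsub s
          _ = (∑ s ∈ Finset.range (δ + L), W δ s ⬝ᵥ u i (c + s))
                - ∑ s ∈ Finset.range (δ + L), ∑ j : Fin δ, a j * (W (j : ℕ) s ⬝ᵥ u i (c + s)) :=
              Finset.sum_sub_distrib _ _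
          _ = - η ((A ^ δ).mulVec (x i c))
                - ∑ j : Fin δ, a j * (- η ((A ^ (j : ℕ)).mulVec (x i c))) := by
              rw [hWj δ le_rfl, Finset.sum_comm]
              congr 1
              refine Finset.sum_congr rfl fun j _ => ?_
              rw [← Finset.mul_sum, hWj (j : ℕ) (le_of_lt j.isLt)]
          _ = 0 := by
              have hAδ : η ((A ^ δ).mulVec (x i c))
                  = ∑ j : Fin δ, a j * η ((A ^ (j : ℕ)).mulVec (x i c)) := by
                rw [ha (x i c), map_sum]
                refine Finset.sum_congr rfl fun j _ => ?_
                rw [_root_.map_smul]; rfl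
              rw [hAδ]
              simp [mul_neg, Finset.sum_neg_distrib]
      intro s hs
      have := congrFun hmain ⟨s, hs⟩
      simpa using this
    have hζeq : ∀ s, s < δ + L → W δ s = ∑ j : Fin δ, a j • W (j : ℕ) s := by
      intro s hs
      have h := hζ0 s hs
      simp only [hζt] at h
      exact sub_eq_zero.mp h
    have hξN0 : ∀ k : ℕ, ξN k = 0 := by
      have key : ∀ q k, L ≤ k + q → ξN k = 0 := by
        intro q
        induction q with
        | zero => intro k hk; simp only [hξN]; rw [dif_neg (by omega)]
        | succ q ihq =>
          intro k hk
          by_cases hkL : k < L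
          · have h1 := hζeq (δ + k) (by omega)
            have hL1 : W δ (δ + k) = ξN k := by
              simp only [hW]
              rw [if_pos ⟨by omega, by omega⟩, if_neg (show ¬ (δ + k < δ) from by omega),
                show δ + k - δ = k from by omega, add_zero]
            have hR : ∑ j : Fin δ, a j • W (j : ℕ) (δ + k) = 0 := by
              refine Finset.sum_eq_zero fun j _ => ?_
              have hjlt : (j : ℕ) < δ := j.isLt
              have hterm : W (j : ℕ) (δ + k) = 0 := by
                simp only [hW]
                rw [if_neg (show ¬ (δ + k < (j : ℕ)) from by omega), add_zero]
                split_ifs with hcond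
                · exact ihq (δ + k - (j : ℕ)) (by omega)
                · rfl
              rw [hterm, smul_zero]
            rw [hL1, hR] at h1
            exact h1
          · simp only [hξN]; rw [dif_neg hkL]
      intro k
      exact key L k (by omega)
    have hξv0 : ∀ k : Fin L, ξv k = 0 := by
      intro k
      have := hξN0 (k : ℕ)
      simp only [hξN] at this
      rwa [dif_pos k.isLt, Fin.eta] at this
    have hgsmall : ∀ r, r < δ → g r = 0 := by
      intro r
      induction r using Nat.strong_induction_on with
      | _ r ihr =>
        intro hr
        have h1 := hζeq (δ - 1 - r) (by omega)
        have hL1 : W δ (δ - 1 - r) = g r := by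
          simp only [hW]
          rw [if_neg (show ¬ (δ ≤ δ - 1 - r ∧ δ - 1 - r < δ + L) from by omega),
            if_pos (show δ - 1 - r < δ from by omega), zero_add,
            show δ - 1 - (δ - 1 - r) = r from by omega]
        have hR : ∑ j : Fin δ, a j • W (j : ℕ) (δ - 1 - r) = 0 := by
          refine Finset.sum_eq_zero fun j _ => ?_
          have hjlt : (j : ℕ) < δ := j.isLt
          have hterm : W (j : ℕ) (δ - 1 - r) = 0 := by
            simp only [hW]
            have hz : (if (j : ℕ) ≤ δ - 1 - r ∧ δ - 1 - r < (j : ℕ) + L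
                then ξN (δ - 1 - r - (j : ℕ)) else 0) = 0 := by
              split_ifs <;> simp [hξN0]
            rw [hz, zero_add]
            split_ifs with hcond
            · exact ihr ((j : ℕ) - 1 - (δ - 1 - r)) (by omega) (by omega)
            · rfl
          rw [hterm, smul_zero]
        rw [hL1, hR] at h1
        exact h1
    have hgall : ∀ p : ℕ, g p = 0 := by
      intro p
      obtain ⟨b, hb⟩ := aux_pow_mulVec A hδpos hδ p
      funext i'
      show g p i' = 0
      simp only [hg]
      rw [hb, map_sum]
      refine Finset.sum_eq_zero fun j _ => ?_
      rw [_root_.map_smul, smul_eq_mul]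
      have h2 : η ((A ^ (j : ℕ)).mulVec fun k => B k i') = 0 := by
        have := congrFun (hgsmall (j : ℕ) j.isLt) i'
        simpa [hg] using this
      rw [h2, mul_zero]
    have hKx : ∀ (i : Fin τ) (p : ℕ), η ((A ^ p).mulVec (x i 0)) = 0 := by
      intro i p
      have hEj0 : ∀ j : ℕ, j < δ → η ((A ^ j).mulVec (x i 0)) = 0 := by
        intro j hj
        have h := hE i 0 j (by omega) (by simpa using hlen i)
        have hz1 : ∑ k : Fin L, ξv k ⬝ᵥ u i (0 + j + (k : ℕ)) = 0 :=
          Finset.sum_eq_zero fun k _ => by rw [hξv0 k, zero_dotProduct]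
        have hz2 : ∑ t ∈ Finset.range j, g (j - 1 - t) ⬝ᵥ u i (0 + t) = 0 :=
          Finset.sum_eq_zero fun t _ => by rw [hgsmall _ (by omega), zero_dotProduct]
        rw [h, hz1, hz2]
        ring
      obtain ⟨b, hb⟩ := aux_pow_mulVec A hδpos hδ p
      rw [hb, map_sum]
      exact Finset.sum_eq_zero fun j _ => by
        rw [_root_.map_smul, smul_eq_mul, hEj0 (j : ℕ) j.isLt, mul_zero]
    rintro ⟨w1, ν⟩ hw
    rw [Submodule.mem_prod] at hw
    obtain ⟨hw1, -⟩ := hw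
    have hηw : η w1 = 0 := by
      have hker : RS ⊔ KS ≤ LinearMap.ker η := by
        refine sup_le ?_ ?_
        · rw [hRS, Submodule.span_le]
          rintro w ⟨j, hj, i', rfl⟩
          have := congrFun (hgall j) i'
          simpa [hg, LinearMap.mem_ker] using this
        · rw [hKS, Submodule.span_le]
          rintro w ⟨j, hj, i0, rfl⟩
          simpa [LinearMap.mem_ker] using hKx i0 j
      exact LinearMap.mem_ker.mp (hker hw1)
    have hζν : ζ ν = 0 := by
      rw [hζapp]
      exact Finset.sum_eq_zero fun k _ => by rw [hξv0 k, zero_dotProduct]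
    rw [hφsplit, hηw, hζν, add_zero]
end

section
/- (Extended fundamental lemma, second part, sufficiency.) Under the assumptions of the first part, if (ū_{[0,L-1]}, x̄_{[0,L-1]}, ȳ_{[0,L-1]}) is an input-state-output trajectory of the system (A, B, C, D) with x̄_0 ∈ R + O + K[x_0^1, ..., x_0^τ], then there exists g such that the stacked vector (ū_{[0,L-1]}, ȳ_{[0,L-1]}) equals [H_L(u^1) ... H_L(u^τ); H_L(y^1) ... H_L(y^τ)] g, i.e., the trajectory is parameterizable by the measured data. -/
open Matrix Finset


namespace EFL



lemma exists_preimage_of_dual {E W : Type*} [AddCommGroup E] [Module ℝ E]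
    [AddCommGroup W] [Module ℝ W]
    (T : E →ₗ[ℝ] W) (b : W)
    (h : ∀ φ : Module.Dual ℝ W, (∀ g, φ (T g) = 0) → φ b = 0) :
    ∃ g, T g = b := by
  have hq : ∀ φ : Module.Dual ℝ (W ⧸ LinearMap.range T),
      φ ((LinearMap.range T).mkQ b) = 0 := by
    intro φ
    refine h (φ.comp (LinearMap.range T).mkQ) (fun g => ?_)
    have : (LinearMap.range T).mkQ (T g) = 0 := by
      rw [Submodule.mkQ_apply, Submodule.Quotient.mk_eq_zero]
      exact ⟨g, rfl⟩
    simp [this]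
  have hb0 : (LinearMap.range T).mkQ b = 0 :=
    (Module.forall_dual_apply_eq_zero_iff ℝ _).1 hq
  rw [Submodule.mkQ_apply, Submodule.Quotient.mk_eq_zero] at hb0
  exact hb0

lemma dual_pi_repr {κ : Type*} [Fintype κ] [DecidableEq κ]
    {M : Type*} [AddCommGroup M] [Module ℝ M]
    (f : (κ → ℝ) →ₗ[ℝ] M) (v : κ → ℝ) :
    f v = ∑ j, v j • f (Pi.single j 1) := by
  rw [f.pi_apply_eq_sum_univ v]
  refine Finset.sum_congr rfl (fun j _ => ?_)
  have hfun : (fun i => if j = i then (1:ℝ) else 0) = Pi.single j 1 := by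
    ext i
    simp [Pi.single_apply, eq_comm]
  rw [hfun]

lemma mulVec_sum {n m : ℕ} {ι : Type*} (s : Finset ι) (A : Matrix (Fin n) (Fin m) ℝ)
    (f : ι → Fin m → ℝ) :
    A.mulVec (∑ i ∈ s, f i) = ∑ i ∈ s, A.mulVec (f i) := by
  classical
  induction s using Finset.induction_on with
  | empty => simp [Matrix.mulVec_zero]
  | insert _ _ h ih => rw [Finset.sum_insert h, Finset.sum_insert h, Matrix.mulVec_add, ih]

lemma sum_mulVec {n m : ℕ} {ι : Type*} (s : Finset ι) (M : ι → Matrix (Fin n) (Fin m) ℝ)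
    (v : Fin m → ℝ) :
    (∑ i ∈ s, M i).mulVec v = ∑ i ∈ s, (M i).mulVec v := by
  classical
  induction s using Finset.induction_on with
  | empty => simp [Matrix.mulVec, dotProduct]
  | insert _ _ h ih => rw [Finset.sum_insert h, Finset.sum_insert h, Matrix.add_mulVec, ih]

lemma state_formula {n m : ℕ} (A : Matrix (Fin n) (Fin n) ℝ) (B : Matrix (Fin n) (Fin m) ℝ)
    (w : ℕ → Fin n → ℝ) (v : ℕ → Fin m → ℝ) (N : ℕ)
    (hdyn : ∀ s, s + 1 < N → w (s + 1) = A.mulVec (w s) + B.mulVec (v s)) :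
    ∀ t, t < N → w t = (A ^ t).mulVec (w 0) +
      ∑ s ∈ Finset.range t, ((A ^ (t - 1 - s)) * B).mulVec (v s) := by
  intro t
  induction t with
  | zero => intro _; simp
  | succ t ih =>
    intro ht
    rw [hdyn t ht, ih (by omega), Matrix.mulVec_add, mulVec_sum, Finset.sum_range_succ]
    have h1 : A.mulVec ((A ^ t).mulVec (w 0)) = (A ^ (t + 1)).mulVec (w 0) := by
      rw [Matrix.mulVec_mulVec, ← pow_succ']
    have h2 : ∀ s ∈ Finset.range t,
        A.mulVec (((A ^ (t - 1 - s)) * B).mulVec (v s))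
          = ((A ^ (t + 1 - 1 - s)) * B).mulVec (v s) := by
      intro s hs
      rw [Finset.mem_range] at hs
      rw [Matrix.mulVec_mulVec, ← Matrix.mul_assoc, ← pow_succ']
      have : t - 1 - s + 1 = t + 1 - 1 - s := by omega
      rw [this]
    rw [h1, Finset.sum_congr rfl h2]
    have h3 : (A ^ (t + 1 - 1 - t)) * B = B := by
      have : t + 1 - 1 - t = 0 := by omega
      rw [this, pow_zero, Matrix.one_mul]
    rw [h3]
    abel

lemma dual_pow_eq_zero {n : ℕ} (A : Matrix (Fin n) (Fin n) ℝ)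
    {W : Type*} [AddCommGroup W] [Module ℝ W]
    (f : Matrix (Fin n) (Fin n) ℝ →ₗ[ℝ] W)
    (hf : ∀ s < (minpoly ℝ A).natDegree, f (A ^ s) = 0) (j : ℕ) :
    f (A ^ j) = 0 := by
  set P := minpoly ℝ A with hP
  set d := P.natDegree with hd
  have hint : IsIntegral ℝ A := Algebra.IsIntegral.isIntegral A
  have hmon : P.Monic := minpoly.monic hint
  have haev : ∑ s ∈ Finset.range (d + 1), P.coeff s • A ^ s = 0 := by
    have h0 := minpoly.aeval ℝ A
    rwa [Polynomial.aeval_eq_sum_range] at h0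
  by_cases hd0 : d = 0
  · have h1 : (1 : Matrix (Fin n) (Fin n) ℝ) = 0 := by
      rw [hd0] at haev
      have hc : P.coeff 0 = 1 := by
        have := hmon.coeff_natDegree
        rwa [← hd, hd0] at this
      simpa [hc] using haev
    have hAj : A ^ j = 0 := by
      calc A ^ j = A ^ j * 1 := (mul_one _).symm
      _ = 0 := by rw [h1, mul_zero]
    rw [hAj, map_zero]
  · have hcd : P.coeff d = 1 := hmon.coeff_natDegree
    have hAd : A ^ d = -∑ s ∈ Finset.range d, P.coeff s • A ^ s := by
      rw [Finset.sum_range_succ, hcd, one_smul] at haev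
      linear_combination (norm := abel) haev
      
    induction j using Nat.strong_induction_on with
    | _ j ih =>
      rcases lt_or_ge j d with h | h
      · exact hf j h
      · have hAj : A ^ j = -∑ s ∈ Finset.range d, P.coeff s • A ^ (j - d + s) := by
          have hsplit : A ^ j = A ^ (j - d) * A ^ d := by
            rw [← pow_add]
            congr 1
            omega
          rw [hsplit, hAd, mul_neg, Finset.mul_sum]
          congr 1
          refine Finset.sum_congr rfl (fun s hs => ?_)
          rw [mul_smul_comm, ← pow_add]
        rw [hAj, map_neg, map_sum]
        have : ∀ s ∈ Finset.range d, f (P.coeff s • A ^ (j - d + s)) = 0 := by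
          intro s hs
          rw [Finset.mem_range] at hs
          rw [LinearMap.map_smul, ih (j - d + s) (by omega), smul_zero]
        rw [Finset.sum_congr rfl this, Finset.sum_const_zero, neg_zero]



lemma dotProduct_sum' {m : ℕ} {ι : Type*} (s : Finset ι) (v : Fin m → ℝ)
    (f : ι → Fin m → ℝ) : v ⬝ᵥ (∑ i ∈ s, f i) = ∑ i ∈ s, v ⬝ᵥ f i := by
  classical
  induction s using Finset.induction_on with
  | empty => simp
  | insert _ _ h ih => rw [Finset.sum_insert h, Finset.sum_insert h, dotProduct_add, ih]

lemma sum_dotProduct' {m : ℕ} {ι : Type*} (s : Finset ι) (f : ι → Fin m → ℝ)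
    (v : Fin m → ℝ) : (∑ i ∈ s, f i) ⬝ᵥ v = ∑ i ∈ s, f i ⬝ᵥ v := by
  classical
  induction s using Finset.induction_on with
  | empty => simp
  | insert _ _ h ih => rw [Finset.sum_insert h, Finset.sum_insert h, add_dotProduct, ih]

lemma vecMul_smul_mat {n m : ℕ} (v : Fin n → ℝ) (c : ℝ) (M : Matrix (Fin n) (Fin m) ℝ) :
    v ᵥ* (c • M) = c • (v ᵥ* M) := by
  ext j
  simp [Matrix.vecMul, dotProduct, Finset.mul_sum, mul_comm, mul_assoc, mul_left_comm]

lemma vecMul_sum' {n m : ℕ} {ι : Type*} (s : Finset ι) (v : Fin n → ℝ)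
    (M : ι → Matrix (Fin n) (Fin m) ℝ) :
    v ᵥ* (∑ i ∈ s, M i) = ∑ i ∈ s, v ᵥ* M i := by
  classical
  induction s using Finset.induction_on with
  | empty => simp
  | insert _ _ h ih => rw [Finset.sum_insert h, Finset.sum_insert h, Matrix.vecMul_add, ih]

lemma pi_single_sum {κ : Type*} [Fintype κ] [DecidableEq κ]
    {M : Type*} [AddCommMonoid M] (w : κ → M) :
    ∑ k, Pi.single k (w k) = w := by
  funext k'
  rw [Finset.sum_apply]
  simp [Pi.single_apply]

lemma dual_pi2_repr {κ₁ κ₂ : Type*} [Fintype κ₁] [DecidableEq κ₁]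
    [Fintype κ₂] [DecidableEq κ₂]
    (f : (κ₁ → κ₂ → ℝ) →ₗ[ℝ] ℝ) (w : κ₁ → κ₂ → ℝ) :
    f w = ∑ k, ∑ a, w k a * f (Pi.single k (Pi.single a 1)) := by
  conv_lhs => rw [← pi_single_sum w, map_sum]
  refine Finset.sum_congr rfl (fun k _ => ?_)
  have := dual_pi_repr (f.comp (LinearMap.single ℝ (fun _ : κ₁ => κ₂ → ℝ) k)) (w k)
  simp only [LinearMap.comp_apply, LinearMap.single_apply] at this
  rw [this]
  refine Finset.sum_congr rfl (fun a _ => ?_)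
  rw [smul_eq_mul]

lemma sum_range_ite_lt {M : Type*} [AddCommMonoid M] (a b : ℕ) (h : a ≤ b) (f : ℕ → M) :
    ∑ r ∈ Finset.range b, (if r < a then f r else 0) = ∑ r ∈ Finset.range a, f r := by
  rw [← Finset.sum_filter]
  congr 1
  ext r
  simp only [Finset.mem_filter, Finset.mem_range]
  omega

end EFL

set_option maxHeartbeats 1000000 in
/-- extended fundamental lemma, sufficiency: under collective
persistency of excitation of order δ + L with δ ≥ deg(minpoly A), every
trajectory (ū, x̄, ȳ) with x̄₀ ∈ R + O + K[x₀¹,...,x₀^τ] is parameterizable by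
the measured data. -/
theorem extended_fundamental_lemma_sufficiency
    (n m p L δ τ : ℕ) (hL : 0 < L) (hδpos : 0 < δ)
    (A : Matrix (Fin n) (Fin n) ℝ) (B : Matrix (Fin n) (Fin m) ℝ)
    (C : Matrix (Fin p) (Fin n) ℝ) (D : Matrix (Fin p) (Fin m) ℝ)
    (T : Fin τ → ℕ)
    (u : Fin τ → ℕ → Fin m → ℝ) (x : Fin τ → ℕ → Fin n → ℝ)
    (y : Fin τ → ℕ → Fin p → ℝ)
    (hdyn : ∀ i t, t + 1 < T i →
      x i (t + 1) = A.mulVec (x i t) + B.mulVec (u i t))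
    (hout : ∀ i t, t < T i → y i t = C.mulVec (x i t) + D.mulVec (u i t))
    (hδ : (minpoly ℝ A).natDegree ≤ δ)
    (hlen : ∀ i, δ + L ≤ T i)
    (hpe : ∀ ξ : Fin (δ + L) → Fin m → ℝ,
      (∀ i : Fin τ, ∀ c : ℕ, c + (δ + L) ≤ T i →
        ∑ k : Fin (δ + L), ξ k ⬝ᵥ u i (c + k) = 0) → ξ = 0)
    (ubar : ℕ → Fin m → ℝ) (xbar : ℕ → Fin n → ℝ) (ybar : ℕ → Fin p → ℝ)
    (hbardyn : ∀ t, t + 1 < L →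
      xbar (t + 1) = A.mulVec (xbar t) + B.mulVec (ubar t))
    (hbarout : ∀ t, t < L → ybar t = C.mulVec (xbar t) + D.mulVec (ubar t))
    (hx0 : xbar 0 ∈
      (Submodule.span ℝ {v : Fin n → ℝ | ∃ j < n, ∃ i : Fin m,
          v = (A ^ j).mulVec (fun k => B k i)}) ⊔
      (⨅ k : Fin n, LinearMap.ker ((C * A ^ (k : ℕ)).mulVecLin)) ⊔
      (Submodule.span ℝ {v : Fin n → ℝ | ∃ j < n, ∃ i : Fin τ,
          v = (A ^ j).mulVec (x i 0)})) :
    ∃ g : (Σ i : Fin τ, Fin (T i - L + 1)) → ℝ,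
      (∀ k : Fin L, ubar k =
        ∑ j : (Σ i : Fin τ, Fin (T i - L + 1)), g j • u j.1 (j.2 + k)) ∧
      (∀ k : Fin L, ybar k =
        ∑ j : (Σ i : Fin τ, Fin (T i - L + 1)), g j • y j.1 (j.2 + k)) := by
  classical
  have hint : IsIntegral ℝ A := Algebra.IsIntegral.isIntegral A
  set P := minpoly ℝ A with hP
  set d := P.natDegree with hdd
  have hmon : P.Monic := minpoly.monic hint
  have hdδ : d ≤ δ := hδ
  have hdn : d ≤ n := by
    have h1 : P ∣ A.charpoly := A.minpoly_dvd_charpoly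
    have h2 : A.charpoly ≠ 0 := A.charpoly_monic.ne_zero
    have h3 := Polynomial.natDegree_le_of_dvd h1 h2
    rwa [Matrix.charpoly_natDegree_eq_dim, Fintype.card_fin] at h3
  set pc : ℕ → ℝ := fun s => P.coeff s with hpc
  have hpc_hi : ∀ s, d < s → pc s = 0 := fun s hs =>
    Polynomial.coeff_eq_zero_of_natDegree_lt hs
  have hpcd : pc d = 1 := hmon.coeff_natDegree
  have hsumA : ∑ s ∈ Finset.range (δ + 1), pc s • A ^ s = 0 := by
    have h0 := minpoly.aeval ℝ A
    rwa [Polynomial.aeval_eq_sum_range' (show P.natDegree < δ + 1 by omega)] at h0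
  have hxf : ∀ (i : Fin τ) (c t : ℕ), c + t < T i →
      x i (c + t) = (A ^ t).mulVec (x i c) +
        ∑ s ∈ Finset.range t, ((A ^ (t - 1 - s)) * B).mulVec (u i (c + s)) := by
    intro i c t hct
    exact EFL.state_formula A B (fun s => x i (c + s)) (fun s => u i (c + s)) (T i - c)
      (fun s hs => hdyn i (c + s) (by omega)) t (by omega)
  set O : Submodule ℝ (Fin n → ℝ) :=
      ⨅ k : Fin n, LinearMap.ker ((C * A ^ (k : ℕ)).mulVecLin) with hO
  let Umap : ((Σ i : Fin τ, Fin (T i - L + 1)) → ℝ) →ₗ[ℝ] (Fin L → Fin m → ℝ) :=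
    { toFun := fun g k => ∑ jj : (Σ i : Fin τ, Fin (T i - L + 1)), g jj • u jj.1 (jj.2 + k)
      map_add' := fun a b => by
        funext k
        simp [add_smul, Finset.sum_add_distrib]
      map_smul' := fun c a => by
        funext k
        simp [Finset.smul_sum, smul_smul] }
  let Xmap : ((Σ i : Fin τ, Fin (T i - L + 1)) → ℝ) →ₗ[ℝ] (Fin n → ℝ) :=
    { toFun := fun g => ∑ jj : (Σ i : Fin τ, Fin (T i - L + 1)), g jj • x jj.1 jj.2
      map_add' := fun a b => by
        simp [add_smul, Finset.sum_add_distrib]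
      map_smul' := fun c a => by
        simp [Finset.smul_sum, smul_smul] }
  let Tmap := LinearMap.prod Umap (O.mkQ.comp Xmap)
  have hUapp : ∀ g k, Umap g k
      = ∑ jj : (Σ i : Fin τ, Fin (T i - L + 1)), g jj • u jj.1 (jj.2 + k) := fun _ _ => rfl
  have hXapp : ∀ g, Xmap g
      = ∑ jj : (Σ i : Fin τ, Fin (T i - L + 1)), g jj • x jj.1 jj.2 := fun _ => rfl
  obtain ⟨g, hg⟩ : ∃ g, Tmap g = ((fun k : Fin L => ubar (k : ℕ)), O.mkQ (xbar 0)) := by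
    apply EFL.exists_preimage_of_dual
    intro φ hφ
    set ψ : (Fin L → Fin m → ℝ) →ₗ[ℝ] ℝ := φ.comp (LinearMap.inl ℝ _ _) with hψdef
    set χ : ((Fin n → ℝ) ⧸ O) →ₗ[ℝ] ℝ := φ.comp (LinearMap.inr ℝ _ _) with hχdef
    have hsplit : ∀ (a : Fin L → Fin m → ℝ) (b : (Fin n → ℝ) ⧸ O),
        φ (a, b) = ψ a + χ b := by
      intro a b
      have hab : (a, b) = ((a, 0) : (Fin L → Fin m → ℝ) × ((Fin n → ℝ) ⧸ O)) + (0, b) := by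
        simp
      rw [hab, map_add]
      rfl
    set η : (Fin n → ℝ) →ₗ[ℝ] ℝ := χ.comp O.mkQ with hηdef
    set ξ : Fin L → Fin m → ℝ := fun k a => ψ (Pi.single k (Pi.single a 1)) with hξdef
    set ηv : Fin n → ℝ := fun q => η (Pi.single q 1) with hηvdef
    have hψapp : ∀ w, ψ w = ∑ k : Fin L, ξ k ⬝ᵥ w k := by
      intro w
      rw [EFL.dual_pi2_repr ψ w]
      refine Finset.sum_congr rfl (fun k _ => ?_)
      simp [dotProduct, mul_comm]
      rfl
    have hηapp : ∀ v, η v = ηv ⬝ᵥ v := by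
      intro v
      rw [EFL.dual_pi_repr η v]
      simp [dotProduct, mul_comm]
      rfl
    have hwin : ∀ (i : Fin τ) (c : ℕ), c + L ≤ T i →
        ηv ⬝ᵥ x i c = -∑ k : Fin L, ξ k ⬝ᵥ u i (c + (k : ℕ)) := by
      intro i c hc
      have hj : c < T i - L + 1 := by have := hlen i; omega
      have h0 := hφ (Pi.single ⟨i, ⟨c, hj⟩⟩ 1)
      have hUe : Umap (Pi.single ⟨i, ⟨c, hj⟩⟩ 1) = fun k : Fin L => u i (c + (k : ℕ)) := by
        funext k
        rw [hUapp]
        rw [Finset.sum_eq_single (⟨i, ⟨c, hj⟩⟩ : Σ i : Fin τ, Fin (T i - L + 1))]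
        · simp
        · intro b _ hb
          rw [Pi.single_eq_of_ne hb, zero_smul]
        · intro hb
          exact absurd (Finset.mem_univ _) hb
      have hXe : Xmap (Pi.single ⟨i, ⟨c, hj⟩⟩ 1) = x i c := by
        rw [hXapp]
        rw [Finset.sum_eq_single (⟨i, ⟨c, hj⟩⟩ : Σ i : Fin τ, Fin (T i - L + 1))]
        · simp
        · intro b _ hb
          rw [Pi.single_eq_of_ne hb, zero_smul]
        · intro hb
          exact absurd (Finset.mem_univ _) hb
      have hTe : Tmap (Pi.single ⟨i, ⟨c, hj⟩⟩ 1)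
          = ((fun k : Fin L => u i (c + (k : ℕ))), O.mkQ (x i c)) := by
        simp only [Tmap, LinearMap.prod_apply, LinearMap.comp_apply, Function.prod]
        rw [hUe, hXe]
      rw [hTe, hsplit] at h0
      have h1 : ∑ k : Fin L, ξ k ⬝ᵥ u i (c + (k : ℕ)) + ηv ⬝ᵥ x i c = 0 := by
        rw [← hψapp, ← hηapp]
        exact h0
      linarith
    set Mm : ℕ → Matrix (Fin n) (Fin m) ℝ := fun t =>
      ∑ s ∈ Finset.range (δ + 1), if t < s then pc s • (A ^ (s - 1 - t) * B) else 0 with hMm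
    have hE3 : ∀ (i : Fin τ) (c : ℕ), c + (δ + L) ≤ T i →
        ∑ s ∈ Finset.range (δ + 1), pc s * (ηv ⬝ᵥ x i (c + s))
          = ∑ t ∈ Finset.range δ, (ηv ᵥ* Mm t) ⬝ᵥ u i (c + t) := by
      intro i c hc
      have hE2 : ∑ s ∈ Finset.range (δ + 1), pc s • x i (c + s)
          = ∑ t ∈ Finset.range δ, (Mm t).mulVec (u i (c + t)) := by
        have hterm : ∀ s ∈ Finset.range (δ + 1),
            pc s • x i (c + s) = (pc s • A ^ s).mulVec (x i c)
              + ∑ r ∈ Finset.range δ,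
                  (if r < s then (pc s • (A ^ (s - 1 - r) * B)).mulVec (u i (c + r)) else 0) := by
          intro s hs
          rw [Finset.mem_range] at hs
          rw [hxf i c s (by omega), smul_add, Matrix.smul_mulVec]
          congr 1
          rw [Finset.smul_sum]
          rw [← EFL.sum_range_ite_lt s δ (by omega)
            (fun r => pc s • ((A ^ (s - 1 - r) * B).mulVec (u i (c + r))))]
          refine Finset.sum_congr rfl (fun r _ => ?_)
          split_ifs with h
          · rw [Matrix.smul_mulVec]
          · rfl
        calc ∑ s ∈ Finset.range (δ + 1), pc s • x i (c + s)
            = (∑ s ∈ Finset.range (δ + 1), pc s • A ^ s).mulVec (x i c)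
              + ∑ s ∈ Finset.range (δ + 1), ∑ r ∈ Finset.range δ,
                  (if r < s then (pc s • (A ^ (s - 1 - r) * B)).mulVec (u i (c + r)) else 0) := by
              rw [Finset.sum_congr rfl hterm, Finset.sum_add_distrib, EFL.sum_mulVec]
          _ = ∑ t ∈ Finset.range δ, (Mm t).mulVec (u i (c + t)) := by
              rw [hsumA, Matrix.zero_mulVec, zero_add, Finset.sum_comm]
              refine Finset.sum_congr rfl (fun r _ => ?_)
              simp only [hMm]
              rw [EFL.sum_mulVec]
              refine Finset.sum_congr rfl (fun s _ => ?_)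
              split_ifs with h
              · rfl
              · rw [Matrix.zero_mulVec]
      calc ∑ s ∈ Finset.range (δ + 1), pc s * (ηv ⬝ᵥ x i (c + s))
          = ηv ⬝ᵥ (∑ s ∈ Finset.range (δ + 1), pc s • x i (c + s)) := by
            rw [EFL.dotProduct_sum']
            exact (Finset.sum_congr rfl (fun s _ => by
              rw [dotProduct_smul, smul_eq_mul])).symm
        _ = ηv ⬝ᵥ (∑ t ∈ Finset.range δ, (Mm t).mulVec (u i (c + t))) := by rw [hE2]
        _ = ∑ t ∈ Finset.range δ, (ηv ᵥ* Mm t) ⬝ᵥ u i (c + t) := by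
            rw [EFL.dotProduct_sum']
            exact Finset.sum_congr rfl (fun t _ => by rw [Matrix.dotProduct_mulVec])
    set ξ' : ℕ → Fin m → ℝ := fun k => if h : k < L then ξ ⟨k, h⟩ else 0 with hξ'
    set mv : ℕ → Fin m → ℝ := fun t => ηv ᵥ* Mm t with hmv
    set ζ : Fin (δ + L) → Fin m → ℝ := fun r =>
      (∑ s ∈ Finset.range (δ + 1),
        if s ≤ (r : ℕ) ∧ (r : ℕ) - s < L then pc s • ξ' ((r : ℕ) - s) else 0)
        + (if (r : ℕ) < δ then mv (r : ℕ) else 0) with hζdef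
    have hζ0 : ζ = 0 := by
      apply hpe
      intro i c hc
      have hs2 : ∑ r ∈ Finset.range (δ + L), (if r < δ then mv r else 0) ⬝ᵥ u i (c + r)
          = ∑ r ∈ Finset.range δ, mv r ⬝ᵥ u i (c + r) := by
        rw [← EFL.sum_range_ite_lt δ (δ + L) (by omega) (fun r => mv r ⬝ᵥ u i (c + r))]
        refine Finset.sum_congr rfl (fun r _ => ?_)
        split_ifs with h
        · rfl
        · rw [zero_dotProduct]
      have hs1 : ∑ r ∈ Finset.range (δ + L),
          (∑ s ∈ Finset.range (δ + 1),
            if s ≤ r ∧ r - s < L then pc s • ξ' (r - s) else 0) ⬝ᵥ u i (c + r)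
          = -∑ r ∈ Finset.range δ, mv r ⬝ᵥ u i (c + r) := by
        have e1 : ∀ r ∈ Finset.range (δ + L),
            (∑ s ∈ Finset.range (δ + 1),
              if s ≤ r ∧ r - s < L then pc s • ξ' (r - s) else 0) ⬝ᵥ u i (c + r)
            = ∑ s ∈ Finset.range (δ + 1),
                (if s ≤ r ∧ r - s < L then (pc s • ξ' (r - s)) ⬝ᵥ u i (c + r) else 0) := by
          intro r _
          rw [EFL.sum_dotProduct']
          refine Finset.sum_congr rfl (fun s _ => ?_)
          split_ifs with h
          · rfl
          · rw [zero_dotProduct]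
        rw [Finset.sum_congr rfl e1, Finset.sum_comm]
        have e2 : ∀ s ∈ Finset.range (δ + 1),
            ∑ r ∈ Finset.range (δ + L),
              (if s ≤ r ∧ r - s < L then (pc s • ξ' (r - s)) ⬝ᵥ u i (c + r) else 0)
            = pc s * (∑ k : Fin L, ξ k ⬝ᵥ u i (c + s + (k : ℕ))) := by
          intro s hs
          rw [Finset.mem_range] at hs
          rw [← Finset.sum_filter]
          have hfil : Finset.filter (fun r => s ≤ r ∧ r - s < L) (Finset.range (δ + L))
              = Finset.Ico s (s + L) := by
            ext r
            simp only [Finset.mem_filter, Finset.mem_range, Finset.mem_Ico]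
            omega
          rw [hfil, Finset.sum_Ico_eq_sum_range]
          have e3 : ∀ kk ∈ Finset.range (s + L - s),
              (pc s • ξ' (s + kk - s)) ⬝ᵥ u i (c + (s + kk))
                = pc s * (ξ' kk ⬝ᵥ u i (c + s + kk)) := by
            intro kk _
            have h1 : s + kk - s = kk := by omega
            have h2 : c + (s + kk) = c + s + kk := by omega
            rw [h1, h2, smul_dotProduct, smul_eq_mul]
          rw [Finset.sum_congr rfl e3]
          have h4 : s + L - s = L := by omega
          rw [h4, ← Finset.mul_sum]
          congr 1
          rw [← Fin.sum_univ_eq_sum_range (fun kk => ξ' kk ⬝ᵥ u i (c + s + kk)) L]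
          refine Finset.sum_congr rfl (fun kk _ => ?_)
          have hxk : ξ' (kk : ℕ) = ξ kk := by
            rw [hξ']
            simp [kk.isLt]
          rw [hxk]
        rw [Finset.sum_congr rfl e2]
        have e5 : ∀ s ∈ Finset.range (δ + 1),
            pc s * (∑ k : Fin L, ξ k ⬝ᵥ u i (c + s + (k : ℕ)))
              = -(pc s * (ηv ⬝ᵥ x i (c + s))) := by
          intro s hs
          rw [Finset.mem_range] at hs
          rw [hwin i (c + s) (by omega)]
          ring
        rw [Finset.sum_congr rfl e5, Finset.sum_neg_distrib, hE3 i c hc]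
      simp only [hζdef]
      rw [Fin.sum_univ_eq_sum_range (fun r =>
        ((∑ s ∈ Finset.range (δ + 1),
          if s ≤ r ∧ r - s < L then pc s • ξ' (r - s) else 0)
          + (if r < δ then mv r else 0)) ⬝ᵥ u i (c + r)) (δ + L)]
      simp only [add_dotProduct]
      rw [Finset.sum_add_distrib, hs1, hs2, neg_add_cancel]
    have hζr : ∀ r : ℕ, r < δ + L →
        (∑ s ∈ Finset.range (δ + 1),
          if s ≤ r ∧ r - s < L then pc s • ξ' (r - s) else 0)
          + (if r < δ then mv r else 0) = 0 := by
      intro r hr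
      have h0 := congrFun hζ0 ⟨r, hr⟩
      simpa [hζdef] using h0
    have hmv_hi : ∀ r, d ≤ r → mv r = 0 := by
      intro r hrd
      have hM : Mm r = 0 := by
        simp only [hMm]
        apply Finset.sum_eq_zero
        intro s hs
        split_ifs with h
        · rw [hpc_hi s (by omega), zero_smul]
        · rfl
      rw [hmv]
      simp only [hM, Matrix.vecMul_zero]
    have hξ'zero : ∀ k, ξ' k = 0 := by
      have key : ∀ j, j < L → ξ' (L - 1 - j) = 0 := by
        intro j
        induction j using Nat.strong_induction_on with
        | _ j ih =>
          intro hjL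
          have hr : d + (L - 1 - j) < δ + L := by omega
          have h0 := hζr (d + (L - 1 - j)) hr
          have hmf : (if d + (L - 1 - j) < δ then mv (d + (L - 1 - j)) else 0) = 0 := by
            split_ifs with h
            · exact hmv_hi _ (by omega)
            · rfl
          rw [hmf, add_zero] at h0
          rw [Finset.sum_eq_single d] at h0
          · rw [if_pos ⟨by omega, by omega⟩, hpcd, one_smul] at h0
            have he : d + (L - 1 - j) - d = L - 1 - j := by omega
            rwa [he] at h0
          · intro s hs hsd
            rw [Finset.mem_range] at hs
            rcases lt_or_gt_of_ne hsd with hlt | hgt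
            · split_ifs with hcnd
              · have hk : d + (L - 1 - j) - s < L := hcnd.2
                have hjj : L - 1 - (d + (L - 1 - j) - s) < j := by omega
                have hrew : L - 1 - (L - 1 - (d + (L - 1 - j) - s))
                    = d + (L - 1 - j) - s := by omega
                have hz := ih (L - 1 - (d + (L - 1 - j) - s)) hjj (by omega)
                rw [hrew] at hz
                rw [hz, smul_zero]
              · rfl
            · split_ifs with hcnd
              · rw [hpc_hi s hgt, zero_smul]
              · rfl
          · intro hd2
            exact absurd (Finset.mem_range.2 (by omega)) hd2
      intro k
      by_cases hk : k < L
      · have h1 := key (L - 1 - k) (by omega)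
        have hrew : L - 1 - (L - 1 - k) = k := by omega
        rwa [hrew] at h1
      · rw [hξ']
        simp [hk]
    have hmv_all : ∀ r, r < δ → mv r = 0 := by
      intro r hrδ
      have h0 := hζr r (by omega)
      have hcf : (∑ s ∈ Finset.range (δ + 1),
          if s ≤ r ∧ r - s < L then pc s • ξ' (r - s) else 0) = 0 := by
        apply Finset.sum_eq_zero
        intro s _
        split_ifs with h
        · rw [hξ'zero, smul_zero]
        · rfl
      rw [hcf, zero_add, if_pos hrδ] at h0
      exact h0
    have hηvB : ∀ jj, jj < d → ηv ᵥ* (A ^ jj * B) = 0 := by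
      intro jj
      induction jj using Nat.strong_induction_on with
      | _ jj ih =>
        intro hjd
        have hr : d - 1 - jj < δ := by omega
        have h0 := hmv_all (d - 1 - jj) hr
        have hexp : mv (d - 1 - jj) = ∑ s ∈ Finset.range (δ + 1),
            (if d - 1 - jj < s then pc s • (ηv ᵥ* (A ^ (s - 1 - (d - 1 - jj)) * B)) else 0) := by
          rw [hmv]
          simp only [hMm]
          rw [EFL.vecMul_sum']
          refine Finset.sum_congr rfl (fun s _ => ?_)
          split_ifs with h
          · rw [EFL.vecMul_smul_mat]
          · rw [Matrix.vecMul_zero]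
        rw [hexp] at h0
        rw [Finset.sum_eq_single d] at h0
        · rw [if_pos (by omega), hpcd, one_smul] at h0
          have he : d - 1 - (d - 1 - jj) = jj := by omega
          rwa [he] at h0
        · intro s hs hsd
          rw [Finset.mem_range] at hs
          rcases lt_or_gt_of_ne hsd with hlt | hgt
          · split_ifs with hcnd
            · have hlt2 : s - 1 - (d - 1 - jj) < jj := by omega
              rw [ih _ hlt2 (by omega), smul_zero]
            · rfl
          · split_ifs with hcnd
            · rw [hpc_hi s hgt, zero_smul]
            · rfl
        · intro hd2
          exact absurd (Finset.mem_range.2 (by omega)) hd2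
    have hηvB_all : ∀ jj, ηv ᵥ* (A ^ jj * B) = 0 := by
      intro jj
      exact EFL.dual_pow_eq_zero A
        { toFun := fun Mt => ηv ᵥ* (Mt * B)
          map_add' := fun M N => by
            show ηv ᵥ* ((M + N) * B) = ηv ᵥ* (M * B) + ηv ᵥ* (N * B)
            rw [Matrix.add_mul, Matrix.vecMul_add]
          map_smul' := fun c M => by
            show ηv ᵥ* ((c • M) * B) = c • (ηv ᵥ* (M * B))
            rw [Matrix.smul_mul, EFL.vecMul_smul_mat] }
        (fun s hs => hηvB s hs) jj
    have hηx : ∀ (i : Fin τ) (c : ℕ), c + L ≤ T i → ηv ⬝ᵥ x i c = 0 := by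
      intro i c hc
      rw [hwin i c hc]
      have hz : ∑ k : Fin L, ξ k ⬝ᵥ u i (c + (k : ℕ)) = 0 := by
        apply Finset.sum_eq_zero
        intro k _
        have hxk : ξ k = ξ' (k : ℕ) := by
          rw [hξ']
          simp [k.isLt]
        rw [hxk, hξ'zero, zero_dotProduct]
      rw [hz, neg_zero]
    have hηAx0 : ∀ (i : Fin τ) (s : ℕ), s ≤ δ → ηv ⬝ᵥ (A ^ s).mulVec (x i 0) = 0 := by
      intro i s hsδ
      have hsT : 0 + s < T i := by have := hlen i; omega
      have hx := hxf i 0 s hsT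
      simp only [Nat.zero_add] at hx
      have h1 : ηv ⬝ᵥ x i s = 0 := hηx i s (by have := hlen i; omega)
      rw [hx, dotProduct_add, EFL.dotProduct_sum'] at h1
      have hz : ∀ r ∈ Finset.range s, ηv ⬝ᵥ ((A ^ (s - 1 - r)) * B).mulVec (u i r) = 0 := by
        intro r _
        rw [Matrix.dotProduct_mulVec, hηvB_all, zero_dotProduct]
      rw [Finset.sum_eq_zero hz, add_zero] at h1
      exact h1
    obtain ⟨ab, hab, kk, hkk, hx0eq⟩ := Submodule.mem_sup.1 hx0
    obtain ⟨rr, hrr, oo, hoo, habeq⟩ := Submodule.mem_sup.1 hab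
    have hηrr : η rr = 0 := by
      have hsub : {v : Fin n → ℝ | ∃ j < n, ∃ i : Fin m, v = (A ^ j).mulVec (fun k => B k i)}
          ⊆ ↑(LinearMap.ker η) := by
        rintro v ⟨j, hj, i0, rfl⟩
        simp only [SetLike.mem_coe, LinearMap.mem_ker]
        rw [hηapp, Matrix.dotProduct_mulVec]
        have h2 : (ηv ᵥ* A ^ j) ᵥ* B = 0 := by
          rw [Matrix.vecMul_vecMul]
          exact hηvB_all j
        have h3 := congrFun h2 i0
        simpa [Matrix.vecMul, dotProduct] using h3
      have h4 := Submodule.span_le.mpr hsub hrr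
      simpa using h4
    have hηoo : η oo = 0 := by
      have hoz : O.mkQ oo = 0 := (Submodule.Quotient.mk_eq_zero O).2 hoo
      rw [hηdef, LinearMap.comp_apply, hoz, map_zero]
    have hηkk : η kk = 0 := by
      have hsub : {v : Fin n → ℝ | ∃ j < n, ∃ i : Fin τ, v = (A ^ j).mulVec (x i 0)}
          ⊆ ↑(LinearMap.ker η) := by
        rintro v ⟨j, hj, i0, rfl⟩
        simp only [SetLike.mem_coe, LinearMap.mem_ker]
        exact EFL.dual_pow_eq_zero A
          { toFun := fun Mt => η (Mt.mulVec (x i0 0))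
            map_add' := fun M N => by
              show η ((M + N).mulVec (x i0 0)) = η (M.mulVec (x i0 0)) + η (N.mulVec (x i0 0))
              rw [Matrix.add_mulVec, map_add]
            map_smul' := fun c M => by
              show η ((c • M).mulVec (x i0 0)) = c • η (M.mulVec (x i0 0))
              rw [Matrix.smul_mulVec, LinearMap.map_smul]
          }
          (fun s hs => by
            have hs' : s < d := hs
            show η ((A ^ s).mulVec (x i0 0)) = 0
            rw [hηapp]
            exact hηAx0 i0 s (by omega)) j
      have h4 := Submodule.span_le.mpr hsub hkk
      simpa using h4
    have hη0 : η (xbar 0) = 0 := by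
      rw [← hx0eq, map_add, ← habeq, map_add, hηrr, hηoo, hηkk]
      ring
    rw [hsplit]
    have hψu : ψ (fun k : Fin L => ubar (k : ℕ)) = 0 := by
      rw [hψapp]
      apply Finset.sum_eq_zero
      intro k _
      have hxk : ξ k = ξ' (k : ℕ) := by
        rw [hξ']
        simp [k.isLt]
      rw [hxk, hξ'zero, zero_dotProduct]
    have hχ0 : χ (O.mkQ (xbar 0)) = 0 := by
      rw [hηdef, LinearMap.comp_apply] at hη0
      exact hη0
    rw [hψu, hχ0, add_zero]
  have hgU : ∀ k : Fin L,
      (∑ jj : (Σ i : Fin τ, Fin (T i - L + 1)), g jj • u jj.1 (jj.2 + (k : ℕ)))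
        = ubar (k : ℕ) := by
    intro k
    have h1 := congrArg Prod.fst hg
    exact congrFun h1 k
  have hgU' : ∀ s : ℕ, s < L →
      (∑ jj : (Σ i : Fin τ, Fin (T i - L + 1)), g jj • u jj.1 (jj.2 + s)) = ubar s :=
    fun s hs => hgU ⟨s, hs⟩
  have hdiff : xbar 0 - Xmap g ∈ O := by
    have h2 := congrArg Prod.snd hg
    simp only [Tmap, LinearMap.prod_apply, LinearMap.comp_apply, Function.prod,
      Submodule.mkQ_apply] at h2
    exact (Submodule.Quotient.eq O).1 h2.symm
  have hCdiff : ∀ t : ℕ, (C * A ^ t).mulVec (xbar 0 - Xmap g) = 0 := by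
    intro t
    exact EFL.dual_pow_eq_zero A
      { toFun := fun Mt => (C * Mt).mulVec (xbar 0 - Xmap g)
        map_add' := fun M N => by
          show (C * (M + N)).mulVec (xbar 0 - Xmap g)
            = (C * M).mulVec (xbar 0 - Xmap g) + (C * N).mulVec (xbar 0 - Xmap g)
          rw [Matrix.mul_add, Matrix.add_mulVec]
        map_smul' := fun c M => by
          show (C * (c • M)).mulVec (xbar 0 - Xmap g) = c • ((C * M).mulVec (xbar 0 - Xmap g))
          rw [Matrix.mul_smul, Matrix.smul_mulVec] }
      (fun s hs => by
        have hs' : s < d := hs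
        have hsn : s < n := by omega
        have h5 := (Submodule.mem_iInf _).1 hdiff ⟨s, hsn⟩
        simpa using h5) t
  have hxbar : ∀ t : ℕ, t < L → xbar t = (A ^ t).mulVec (xbar 0) +
      ∑ s ∈ Finset.range t, ((A ^ (t - 1 - s)) * B).mulVec (ubar s) :=
    fun t ht => EFL.state_formula A B xbar ubar L hbardyn t ht
  refine ⟨g, fun k => (hgU k).symm, ?_⟩
  intro k
  have hkL : (k : ℕ) < L := k.isLt
  have hyL : ybar (k : ℕ) = C.mulVec ((A ^ (k : ℕ)).mulVec (xbar 0))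
      + (∑ s ∈ Finset.range (k : ℕ), C.mulVec (((A ^ ((k : ℕ) - 1 - s)) * B).mulVec (ubar s)))
      + D.mulVec (ubar (k : ℕ)) := by
    rw [hbarout (k : ℕ) hkL, hxbar (k : ℕ) hkL, Matrix.mulVec_add, EFL.mulVec_sum]
  have hterm : ∀ jj : (Σ i : Fin τ, Fin (T i - L + 1)),
      g jj • y jj.1 (jj.2 + (k : ℕ))
        = g jj • C.mulVec ((A ^ (k : ℕ)).mulVec (x jj.1 jj.2))
          + (∑ s ∈ Finset.range (k : ℕ),
              g jj • C.mulVec (((A ^ ((k : ℕ) - 1 - s)) * B).mulVec (u jj.1 (jj.2 + s))))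
          + g jj • D.mulVec (u jj.1 (jj.2 + (k : ℕ))) := by
    intro jj
    have hTj : (jj.2 : ℕ) + (k : ℕ) < T jj.1 := by
      have h1 := jj.2.isLt
      have h2 := hlen jj.1
      omega
    rw [hout jj.1 _ hTj, hxf jj.1 jj.2 (k : ℕ) hTj, Matrix.mulVec_add, EFL.mulVec_sum,
      smul_add, smul_add, Finset.smul_sum]
  have hc1 : C.mulVec ((A ^ (k : ℕ)).mulVec (Xmap g))
      = ∑ jj : (Σ i : Fin τ, Fin (T i - L + 1)),
          g jj • C.mulVec ((A ^ (k : ℕ)).mulVec (x jj.1 jj.2)) := by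
    rw [hXapp, EFL.mulVec_sum,
      Finset.sum_congr rfl (fun jj _ => Matrix.mulVec_smul _ _ _), EFL.mulVec_sum]
    exact Finset.sum_congr rfl (fun jj _ => Matrix.mulVec_smul _ _ _)
  have hc2 : ∀ s : ℕ, s < L →
      C.mulVec (((A ^ ((k : ℕ) - 1 - s)) * B).mulVec (ubar s))
        = ∑ jj : (Σ i : Fin τ, Fin (T i - L + 1)),
            g jj • C.mulVec (((A ^ ((k : ℕ) - 1 - s)) * B).mulVec (u jj.1 (jj.2 + s))) := by
    intro s hs
    rw [← hgU' s hs, EFL.mulVec_sum,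
      Finset.sum_congr rfl (fun jj _ => Matrix.mulVec_smul _ _ _), EFL.mulVec_sum]
    exact Finset.sum_congr rfl (fun jj _ => Matrix.mulVec_smul _ _ _)
  have hc3 : D.mulVec (ubar (k : ℕ))
      = ∑ jj : (Σ i : Fin τ, Fin (T i - L + 1)),
          g jj • D.mulVec (u jj.1 (jj.2 + (k : ℕ))) := by
    rw [← hgU' (k : ℕ) hkL, EFL.mulVec_sum]
    exact Finset.sum_congr rfl (fun jj _ => Matrix.mulVec_smul _ _ _)
  have hyR : ∑ jj : (Σ i : Fin τ, Fin (T i - L + 1)), g jj • y jj.1 (jj.2 + (k : ℕ))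
      = C.mulVec ((A ^ (k : ℕ)).mulVec (Xmap g))
        + (∑ s ∈ Finset.range (k : ℕ),
            C.mulVec (((A ^ ((k : ℕ) - 1 - s)) * B).mulVec (ubar s)))
        + D.mulVec (ubar (k : ℕ)) := by
    rw [Finset.sum_congr rfl (fun jj _ => hterm jj), Finset.sum_add_distrib,
      Finset.sum_add_distrib, hc1, hc3]
    congr 1
    congr 1
    rw [Finset.sum_comm]
    refine (Finset.sum_congr rfl (fun s hs => ?_)).symm
    rw [Finset.mem_range] at hs
    exact hc2 s (by omega)
  have hccast : C.mulVec ((A ^ (k : ℕ)).mulVec (xbar 0))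
      = C.mulVec ((A ^ (k : ℕ)).mulVec (Xmap g)) := by
    have h0 := hCdiff (k : ℕ)
    have h1 : (C * A ^ (k : ℕ)).mulVecLin (xbar 0 - Xmap g) = 0 := by simpa using h0
    rw [map_sub, sub_eq_zero] at h1
    simp only [Matrix.mulVecLin_apply] at h1
    rw [Matrix.mulVec_mulVec, Matrix.mulVec_mulVec]
    exact h1
  rw [hyL, hyR, hccast]
end

section
/- (Extended fundamental lemma, second part, necessity.) If (ū_{[0,L-1]}, ȳ_{[0,L-1]}) = [H_L(u^1) ... H_L(u^τ); H_L(y^1) ... H_L(y^τ)] g for some g, where (u^i, x^i, y^i) are trajectories of the LTI system (A, B, C, D), then there exists a state trajectory x̄_{[0,L-1]} with x̄_0 ∈ R + K[x_0^1, ..., x_0^τ] such that (ū, x̄, ȳ) is an input-state-output trajectory of the system; in particular x̄_0 = [H_1(x^1_{[0,T^1-L]}) ... H_1(x^τ_{[0,T^τ-L]})] g. -/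
open Matrix Finset

lemma sum_mulVec' {n : Type*} {k : Type*} [Fintype n] [DecidableEq k]
    (s : Finset k) (f : k → Matrix n n ℝ) (v : n → ℝ) :
    (∑ i ∈ s, f i).mulVec v = ∑ i ∈ s, (f i).mulVec v := by
  induction s using Finset.induction_on with
  | empty => simp
  | insert _ _ h ih => simp [Finset.sum_insert h, Matrix.add_mulVec, ih]

lemma mulVec_sum' {M N : Type*} [Fintype N] {k : Type*}
    (A : Matrix M N ℝ) (s : Finset k) (f : k → N → ℝ) :
    A.mulVec (∑ i ∈ s, f i) = ∑ i ∈ s, A.mulVec (f i) :=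
  map_sum (Matrix.mulVecLin A) f s

lemma pow_mulVec_mem_span {n : ℕ} (A : Matrix (Fin n) (Fin n) ℝ) (v : Fin n → ℝ) (s : ℕ) :
    (A ^ s).mulVec v ∈
      Submodule.span ℝ {w : Fin n → ℝ | ∃ j < n, w = (A ^ j).mulVec v} := by
  rcases Nat.eq_zero_or_pos n with hn | hn
  · subst hn
    have : (A ^ s).mulVec v = 0 := Subsingleton.elim _ _
    rw [this]; exact Submodule.zero_mem _
  induction s using Nat.strong_induction_on with
  | _ s IH =>
    by_cases hs : s < n
    · exact Submodule.subset_span ⟨s, hs, rfl⟩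
    · push_neg at hs
      set q : Polynomial ℝ := Polynomial.X ^ n - A.charpoly with hq
      have hqdeg : q.natDegree < n := by
        by_cases hq0 : q = 0
        · rw [hq0]; simpa using hn
        · rw [Polynomial.natDegree_lt_iff_degree_lt hq0]
          have h1 : (Polynomial.X ^ n : Polynomial ℝ).degree = A.charpoly.degree := by
            rw [Polynomial.degree_X_pow, A.charpoly_degree_eq_dim]
            simp
          have h2 : (Polynomial.X ^ n : Polynomial ℝ).leadingCoeff =
              A.charpoly.leadingCoeff := by
            rw [Polynomial.leadingCoeff_X_pow, A.charpoly_monic.leadingCoeff]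
          have := Polynomial.degree_sub_lt h1 (pow_ne_zero n Polynomial.X_ne_zero) h2
          rwa [Polynomial.degree_X_pow, ← hq] at this
      have hAn : A ^ n = Polynomial.aeval A q := by
        rw [hq, map_sub, Polynomial.aeval_X_pow, A.aeval_self_charpoly, sub_zero]
      have hsum : A ^ n = ∑ i ∈ range n, q.coeff i • A ^ i := by
        rw [hAn, Polynomial.aeval_eq_sum_range' hqdeg]
      have hAs : A ^ s = ∑ i ∈ range n, q.coeff i • A ^ (s - n + i) := by
        have h3 : A ^ s = A ^ (s - n) * A ^ n := by
          rw [← pow_add, Nat.sub_add_cancel hs]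
        rw [h3, hsum, Finset.mul_sum]
        refine Finset.sum_congr rfl fun i _ => ?_
        rw [mul_smul_comm, ← pow_add]
      rw [hAs, sum_mulVec']
      refine Submodule.sum_mem _ fun i hi => ?_
      rw [smul_mulVec]
      refine Submodule.smul_mem _ _ (IH (s - n + i) ?_)
      have : i < n := Finset.mem_range.mp hi
      omega

/-- extended fundamental lemma, necessity: any input-output pair
parameterizable by the measured data is a trajectory of the system with an
initial state x̄₀ = Σ g_j x^{i_j}_{c_j} ∈ R + K[x₀¹,...,x₀^τ]. -/
theorem extended_fundamental_lemma_necessity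
    (n m p L τ : ℕ) (hL : 0 < L)
    (A : Matrix (Fin n) (Fin n) ℝ) (B : Matrix (Fin n) (Fin m) ℝ)
    (C : Matrix (Fin p) (Fin n) ℝ) (D : Matrix (Fin p) (Fin m) ℝ)
    (T : Fin τ → ℕ) (hlen : ∀ i, L ≤ T i)
    (u : Fin τ → ℕ → Fin m → ℝ) (x : Fin τ → ℕ → Fin n → ℝ)
    (y : Fin τ → ℕ → Fin p → ℝ)
    (hdyn : ∀ i t, t + 1 < T i →
      x i (t + 1) = A.mulVec (x i t) + B.mulVec (u i t))
    (hout : ∀ i t, t < T i → y i t = C.mulVec (x i t) + D.mulVec (u i t))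
    (ubar : ℕ → Fin m → ℝ) (ybar : ℕ → Fin p → ℝ)
    (g : (Σ i : Fin τ, Fin (T i - L + 1)) → ℝ)
    (hu : ∀ k : Fin L, ubar k =
      ∑ j : (Σ i : Fin τ, Fin (T i - L + 1)), g j • u j.1 (j.2 + k))
    (hy : ∀ k : Fin L, ybar k =
      ∑ j : (Σ i : Fin τ, Fin (T i - L + 1)), g j • y j.1 (j.2 + k)) :
    ∃ xbar : ℕ → Fin n → ℝ,
      xbar 0 = ∑ j : (Σ i : Fin τ, Fin (T i - L + 1)), g j • x j.1 j.2 ∧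
      xbar 0 ∈
        (Submodule.span ℝ {v : Fin n → ℝ | ∃ j < n, ∃ i : Fin m,
            v = (A ^ j).mulVec (fun k => B k i)}) ⊔
        (Submodule.span ℝ {v : Fin n → ℝ | ∃ j < n, ∃ i : Fin τ,
            v = (A ^ j).mulVec (x i 0)}) ∧
      (∀ t, t + 1 < L →
        xbar (t + 1) = A.mulVec (xbar t) + B.mulVec (ubar t)) ∧
      (∀ t, t < L → ybar t = C.mulVec (xbar t) + D.mulVec (ubar t)) := by
  classical
  set R : Submodule ℝ (Fin n → ℝ) := Submodule.span ℝ {v : Fin n → ℝ | ∃ j < n, ∃ i : Fin m,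
      v = (A ^ j).mulVec (fun k => B k i)} with hR
  set K : Submodule ℝ (Fin n → ℝ) := Submodule.span ℝ {v : Fin n → ℝ | ∃ j < n, ∃ i : Fin τ,
      v = (A ^ j).mulVec (x i 0)} with hK
  have hidx : ∀ (j : (Σ i : Fin τ, Fin (T i - L + 1))) (t : ℕ), t < L →
      (j.2 : ℕ) + t < T j.1 := by
    intro j t ht
    have h1 : (j.2 : ℕ) < T j.1 - L + 1 := j.2.isLt
    have h2 : L ≤ T j.1 := hlen j.1
    omega
  refine ⟨fun t => ∑ j : (Σ i : Fin τ, Fin (T i - L + 1)), g j • x j.1 (j.2 + t), by simp, ?_, ?_, ?_⟩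
  · -- membership of the initial state
    rcases Nat.eq_zero_or_pos n with hn | hn
    · subst hn
      have h0 : (∑ j : (Σ i : Fin τ, Fin (T i - L + 1)), g j • x j.1 (j.2 + 0))
          = (0 : Fin 0 → ℝ) := Subsingleton.elim _ _
      simp only [h0]
      exact Submodule.zero_mem _
    have hBmem : ∀ w : Fin m → ℝ, B.mulVec w ∈ R ⊔ K := by
      intro w
      have hw : B.mulVec w = ∑ e : Fin m, w e • (A ^ 0).mulVec (fun k => B k e) := by
        ext k
        simp [Matrix.mulVec, dotProduct, mul_comm]
      rw [hw]
      refine Submodule.sum_mem _ fun e _ => Submodule.smul_mem _ _ ?_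
      exact Submodule.mem_sup_left (Submodule.subset_span ⟨0, hn, e, rfl⟩)
    have hAinv : ∀ w ∈ R ⊔ K, A.mulVec w ∈ R ⊔ K := by
      have hsupeq : R ⊔ K = Submodule.span ℝ
          (({v : Fin n → ℝ | ∃ j < n, ∃ i : Fin m, v = (A ^ j).mulVec (fun k => B k i)}) ∪
           ({v : Fin n → ℝ | ∃ j < n, ∃ i : Fin τ, v = (A ^ j).mulVec (x i 0)})) := by
        rw [hR, hK, Submodule.span_union]
      intro w hw
      rw [hsupeq] at hw
      induction hw using Submodule.span_induction with
      | mem w hw =>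
        rcases hw with ⟨j, hj, i, rfl⟩ | ⟨j, hj, i, rfl⟩
        · refine Submodule.mem_sup_left ?_
          rw [Matrix.mulVec_mulVec, ← pow_succ']
          refine Submodule.span_mono ?_ (pow_mulVec_mem_span A (fun k => B k i) (j + 1))
          rintro w ⟨j', hj', rfl⟩
          exact ⟨j', hj', i, rfl⟩
        · refine Submodule.mem_sup_right ?_
          rw [Matrix.mulVec_mulVec, ← pow_succ']
          refine Submodule.span_mono ?_ (pow_mulVec_mem_span A (x i 0) (j + 1))
          rintro w ⟨j', hj', rfl⟩
          exact ⟨j', hj', i, rfl⟩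
      | zero => simp
      | add a b _ _ ha hb =>
        rw [Matrix.mulVec_add]; exact Submodule.add_mem _ ha hb
      | smul c a _ ha =>
        rw [Matrix.mulVec_smul]; exact Submodule.smul_mem _ _ ha
    have hxmem : ∀ (i : Fin τ) (s : ℕ), s < T i → x i s ∈ R ⊔ K := by
      intro i s
      induction s with
      | zero =>
        intro _
        have h0 : x i 0 = (A ^ 0).mulVec (x i 0) := by
          rw [pow_zero, Matrix.one_mulVec]
        refine Submodule.mem_sup_right (Submodule.subset_span ⟨0, hn, i, h0⟩)
      | succ s ih =>
        intro hs
        rw [hdyn i s hs]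
        exact Submodule.add_mem _ (hAinv _ (ih (by omega))) (hBmem _)
    refine Submodule.sum_mem _ fun j _ => Submodule.smul_mem _ _ ?_
    exact hxmem j.1 _ (hidx j 0 hL)
  · -- dynamics
    intro t ht
    have hut : ubar t = ∑ j : (Σ i : Fin τ, Fin (T i - L + 1)), g j • u j.1 (j.2 + t) := by
      have := hu ⟨t, by omega⟩
      simpa using this
    have hstep : ∀ j : (Σ i : Fin τ, Fin (T i - L + 1)),
        x j.1 ((j.2 : ℕ) + (t + 1)) = A.mulVec (x j.1 (j.2 + t)) + B.mulVec (u j.1 (j.2 + t)) := by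
      intro j
      have h1 := hdyn j.1 ((j.2 : ℕ) + t) (by have := hidx j (t + 1) ht; omega)
      rw [show (j.2 : ℕ) + (t + 1) = (j.2 : ℕ) + t + 1 by omega]
      exact h1
    rw [hut, mulVec_sum', mulVec_sum', ← Finset.sum_add_distrib]
    refine Finset.sum_congr rfl fun j _ => ?_
    rw [hstep j, Matrix.mulVec_smul, Matrix.mulVec_smul, smul_add]
  · -- output
    intro t ht
    have hut : ubar t = ∑ j : (Σ i : Fin τ, Fin (T i - L + 1)), g j • u j.1 (j.2 + t) := by
      have := hu ⟨t, ht⟩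
      simpa using this
    have hyt : ybar t = ∑ j : (Σ i : Fin τ, Fin (T i - L + 1)), g j • y j.1 (j.2 + t) := by
      have := hy ⟨t, ht⟩
      simpa using this
    have hstep : ∀ j : (Σ i : Fin τ, Fin (T i - L + 1)),
        y j.1 ((j.2 : ℕ) + t) = C.mulVec (x j.1 (j.2 + t)) + D.mulVec (u j.1 (j.2 + t)) :=
      fun j => hout j.1 _ (hidx j t ht)
    rw [hut, hyt, mulVec_sum', mulVec_sum', ← Finset.sum_add_distrib]
    refine Finset.sum_congr rfl fun j _ => ?_
    rw [hstep j, Matrix.mulVec_smul, Matrix.mulVec_smul, smul_add]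
end

section
/- (Corollary: online DeePC correctness.) Let (u_{[0,K-1]}, y_{[0,K-1]}) be an input-output trajectory of the LTI system (A,B,C,D), and suppose u_{[0,T-1]} is persistently exciting of order δ + L with δ ≥ deg(minimal polynomial of A) and L ≤ T ≤ K. Then for every 0 ≤ t ≤ K - L, there exists g ∈ ℝ^{T-L+1} with (u_{[t,t+L-1]}, y_{[t,t+L-1]}) = [H_L(u_{[0,T-1]}); H_L(y_{[0,T-1]})] g. Conversely, every (ū, ȳ) of this form is an input-output trajectory of the system. -/
open Matrix Finset

section Aux

open Polynomial in
lemma pow_rep (n δ : ℕ) (hδpos : 0 < δ) (A : Matrix (Fin n) (Fin n) ℝ)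
    (hδ : (minpoly ℝ A).natDegree ≤ δ) :
    ∃ c : ℕ → ℝ, A ^ δ = ∑ j ∈ range δ, c j • A ^ j := by
  classical
  have hA : IsIntegral ℝ A := IsIntegral.of_finite ℝ A
  have hmon := minpoly.monic hA
  set q := (X ^ δ) %ₘ (minpoly ℝ A) with hq
  have hdeg : q.natDegree < δ := by
    rcases eq_or_ne q 0 with h0 | h0
    · rw [h0]; simpa using hδpos
    · exact lt_of_lt_of_le (Polynomial.natDegree_lt_natDegree h0
        (Polynomial.degree_modByMonic_lt _ hmon)) hδ
  refine ⟨fun j => q.coeff j, ?_⟩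
  have h1 : aeval A (X ^ δ : ℝ[X]) = aeval A q := by
    conv_lhs => rw [← Polynomial.modByMonic_add_div (X ^ δ : ℝ[X]) (minpoly ℝ A)]
    simp only [map_add, map_mul, minpoly.aeval, zero_mul, add_zero]
    rfl
  have h2 : aeval A (X ^ δ : ℝ[X]) = A ^ δ := by simp
  rw [← h2, h1, Polynomial.aeval_eq_sum_range' hdeg]

lemma sum_dotProduct' {ι : Type*} {q : ℕ} (s : Finset ι) (f : ι → Fin q → ℝ) (w : Fin q → ℝ) :
    (∑ j ∈ s, f j) ⬝ᵥ w = ∑ j ∈ s, f j ⬝ᵥ w := by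
  simp only [dotProduct, Finset.sum_apply, Finset.sum_mul]
  rw [Finset.sum_comm]

lemma dotProduct_sum' {ι : Type*} {q : ℕ} (s : Finset ι) (w : Fin q → ℝ) (f : ι → Fin q → ℝ) :
    w ⬝ᵥ (∑ j ∈ s, f j) = ∑ j ∈ s, w ⬝ᵥ f j := by
  simp only [dotProduct, Finset.sum_apply, Finset.mul_sum]
  rw [Finset.sum_comm]

lemma sum_mulVec'_s16 {ι : Type*} {a b : ℕ} (s : Finset ι) (M : ι → Matrix (Fin a) (Fin b) ℝ)
    (v : Fin b → ℝ) : (∑ j ∈ s, M j).mulVec v = ∑ j ∈ s, (M j).mulVec v := by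
  funext i
  simp only [Matrix.mulVec, dotProduct, Finset.sum_apply, Matrix.sum_apply, Finset.sum_mul]
  rw [Finset.sum_comm]

lemma comb_step {ι : Type*} [Fintype ι] {a b d : ℕ}
    (M : Matrix (Fin a) (Fin b) ℝ) (N : Matrix (Fin a) (Fin d) ℝ)
    (g : ι → ℝ) (v : ι → Fin b → ℝ) (w : ι → Fin d → ℝ) :
    M.mulVec (∑ c, g c • v c) + N.mulVec (∑ c, g c • w c)
      = ∑ c, g c • (M.mulVec (v c) + N.mulVec (w c)) := by
  rw [← Matrix.mulVecLin_apply M, ← Matrix.mulVecLin_apply N, map_sum, map_sum,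
    ← Finset.sum_add_distrib]
  refine Finset.sum_congr rfl fun c _ => ?_
  simp [smul_add]

end Aux

/-- online DeePC correctness: any length-L window of an
input-output trajectory is parameterizable by its first length-T segment
(given persistency of excitation of order δ + L, δ ≥ deg minpoly A), and
conversely anything parameterizable is an input-output trajectory. -/
theorem online_deepc_correct
    (n m p K T L δ : ℕ) (hL : 0 < L) (hδpos : 0 < δ)
    (A : Matrix (Fin n) (Fin n) ℝ) (B : Matrix (Fin n) (Fin m) ℝ)
    (C : Matrix (Fin p) (Fin n) ℝ) (D : Matrix (Fin p) (Fin m) ℝ)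
    (u : ℕ → Fin m → ℝ) (y : ℕ → Fin p → ℝ) (x : ℕ → Fin n → ℝ)
    (hx : ∀ s, s + 1 < K → x (s + 1) = A.mulVec (x s) + B.mulVec (u s))
    (hy : ∀ s, s < K → y s = C.mulVec (x s) + D.mulVec (u s))
    (hδ : (minpoly ℝ A).natDegree ≤ δ)
    (hLT : L ≤ T) (hTK : T ≤ K) (hδLT : δ + L ≤ T)
    -- persistency of excitation of order δ + L of u_{[0,T-1]}
    (hpe : ∀ ξ : Fin (δ + L) → Fin m → ℝ,
      (∀ c : ℕ, c + (δ + L) ≤ T →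
        ∑ k : Fin (δ + L), ξ k ⬝ᵥ u (c + k) = 0) → ξ = 0) :
    (∀ t, t + L ≤ K → ∃ g : Fin (T - L + 1) → ℝ,
      (∀ k : Fin L, u (t + k) = ∑ c : Fin (T - L + 1), g c • u (c + k)) ∧
      (∀ k : Fin L, y (t + k) = ∑ c : Fin (T - L + 1), g c • y (c + k))) ∧
    (∀ (ubar : ℕ → Fin m → ℝ) (ybar : ℕ → Fin p → ℝ)
        (g : Fin (T - L + 1) → ℝ),
      (∀ k : Fin L, ubar k = ∑ c : Fin (T - L + 1), g c • u (c + k)) →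
      (∀ k : Fin L, ybar k = ∑ c : Fin (T - L + 1), g c • y (c + k)) →
      ∃ xbar : ℕ → Fin n → ℝ,
        (∀ s, s + 1 < L →
          xbar (s + 1) = A.mulVec (xbar s) + B.mulVec (ubar s)) ∧
        (∀ s, s < L → ybar s = C.mulVec (xbar s) + D.mulVec (ubar s))) := by
  classical
  have hNle : ∀ c : Fin (T - L + 1), (c : ℕ) ≤ T - L := fun c => Nat.lt_succ_iff.mp c.isLt
  constructor
  · -- PART 1
    intro t ht
    obtain ⟨c0, hc0⟩ := pow_rep n δ hδpos A hδ
    have key : ∃ g : Fin (T - L + 1) → ℝ,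
        (∀ a, x t a = ∑ c : Fin (T - L + 1), g c * x (c : ℕ) a) ∧
        (∀ (k : Fin L) (j : Fin m),
          u (t + (k : ℕ)) j = ∑ c : Fin (T - L + 1), g c * u ((c : ℕ) + (k : ℕ)) j) := by
      set vf : ℕ → EuclideanSpace ℝ ((Fin n) ⊕ (Fin L × Fin m)) :=
        fun s => WithLp.toLp 2 (Sum.elim (x s) (fun q : Fin L × Fin m => u (s + (q.1 : ℕ)) q.2)) with hvf_def
      set v : Fin (T - L + 1) → EuclideanSpace ℝ ((Fin n) ⊕ (Fin L × Fin m)) :=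
        fun c => vf (c : ℕ) with hv_def
      set w : EuclideanSpace ℝ ((Fin n) ⊕ (Fin L × Fin m)) := vf t with hw_def
      have hmem : w ∈ Submodule.span ℝ (Set.range v) := by
        rw [← Submodule.orthogonal_orthogonal (Submodule.span ℝ (Set.range v)),
          Submodule.mem_orthogonal]
        intro z hz
        have hvz : ∀ c : Fin (T - L + 1), inner ℝ (v c) z = (0 : ℝ) := fun c =>
          (Submodule.mem_orthogonal _ z).mp hz (v c)
            (Submodule.subset_span (Set.mem_range_self c))
        set η : Fin n → ℝ := fun a => z (Sum.inl a) with hη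
        set ξ' : ℕ → Fin m → ℝ :=
          fun i => if h : i < L then (fun j => z (Sum.inr (⟨i, h⟩, j))) else 0 with hξ'
        set e : ℕ → ℝ := fun s => η ⬝ᵥ x s + ∑ i ∈ range L, ξ' i ⬝ᵥ u (s + i) with he
        have hinner : ∀ s : ℕ, (inner ℝ (vf s) z : ℝ) = e s := by
          intro s
          show (inner ℝ (vf s) z : ℝ) = η ⬝ᵥ x s + ∑ i ∈ range L, ξ' i ⬝ᵥ u (s + i)
          rw [← Fin.sum_univ_eq_sum_range (fun i => ξ' i ⬝ᵥ u (s + i)) L]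
          rw [PiLp.inner_apply]
          simp only [RCLike.inner_apply, conj_trivial]
          rw [Fintype.sum_sum_type, Fintype.sum_prod_type]
          refine congrArg₂ (· + ·) ?_ ?_
          · simp only [hvf_def, Sum.elim_inl, hη, dotProduct]
          · refine Finset.sum_congr rfl fun k _ => ?_
            simp only [hvf_def, Sum.elim_inr, hξ', dotProduct, k.isLt, dif_pos, Fin.eta]
        have he0 : ∀ s, s ≤ T - L → e s = 0 := by
          intro s hs
          have h := hvz ⟨s, by omega⟩
          rw [hv_def] at h
          rw [hinner s] at h
          exact h
        set gco : ℕ → ℕ → Fin m → ℝ :=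
          fun j i => if i < j then Matrix.vecMul η (A ^ (j - 1 - i) * B) else ξ' (i - j)
          with hgco
        have claim1 : ∀ j s, s + j + L ≤ K →
            e (s + j) = Matrix.vecMul η (A ^ j) ⬝ᵥ x s
              + ∑ i ∈ range (j + L), gco j i ⬝ᵥ u (s + i) := by
          intro j
          induction j with
          | zero =>
            intro s hs
            have hg0 : ∀ i, gco 0 i = ξ' i := by
              intro i
              simp only [hgco, Nat.not_lt_zero, if_false, Nat.sub_zero]
            simp only [Nat.add_zero, pow_zero, Matrix.vecMul_one, Nat.zero_add]
            rw [Finset.sum_congr rfl fun i _ => by rw [hg0 i]]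
          | succ j ih =>
            intro s hs
            have h1 : s + (j + 1) = (s + 1) + j := by omega
            rw [h1, ih (s + 1) (by omega), hx s (by omega)]
            rw [dotProduct_add, Matrix.dotProduct_mulVec, Matrix.dotProduct_mulVec,
              Matrix.vecMul_vecMul, Matrix.vecMul_vecMul, ← pow_succ]
            have hgs : ∀ i, gco (j + 1) (i + 1) = gco j i := by
              intro i
              simp only [hgco]
              by_cases h : i < j
              · rw [if_pos (show i + 1 < j + 1 from by omega), if_pos h,
                  show j + 1 - 1 - (i + 1) = j - 1 - i from by omega]
              · rw [if_neg (show ¬(i + 1 < j + 1) from by omega), if_neg h,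
                  show i + 1 - (j + 1) = i - j from by omega]
            have hsum : ∑ i ∈ range (j + 1 + L), gco (j + 1) i ⬝ᵥ u (s + i)
                = Matrix.vecMul η (A ^ j * B) ⬝ᵥ u s
                  + ∑ i ∈ range (j + L), gco j i ⬝ᵥ u (s + 1 + i) := by
              rw [show j + 1 + L = (j + L) + 1 by omega, Finset.sum_range_succ']
              rw [add_comm]
              refine congrArg₂ (· + ·) ?_ ?_
              · simp only [hgco]
                rw [if_pos (show 0 < j + 1 from by omega),
                  show j + 1 - 1 - 0 = j from by omega, Nat.add_zero]
              · refine Finset.sum_congr rfl fun i _ => ?_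
                rw [hgs i, show s + (i + 1) = s + 1 + i by omega]
            rw [hsum]
            ring
        have hext : ∀ j, j ≤ δ → ∀ s,
            ∑ i ∈ range (j + L), gco j i ⬝ᵥ u (s + i)
              = ∑ i ∈ range (δ + L), gco j i ⬝ᵥ u (s + i) := by
          intro j hj s
          refine Finset.sum_subset (by intro i hi; simp only [Finset.mem_range] at *; omega) ?_
          intro i hi hni
          simp only [Finset.mem_range] at hi hni
          simp only [hgco]
          rw [if_neg (show ¬ i < j from by omega)]
          have hz0 : ξ' (i - j) = 0 := by
            simp only [hξ']
            exact dif_neg (show ¬ i - j < L from by omega)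
          rw [hz0, zero_dotProduct]
        set Φ : ℕ → Fin m → ℝ := fun i => gco δ i - ∑ j ∈ range δ, c0 j • gco j i with hΦdef
        have hstate : ∀ s, Matrix.vecMul η (A ^ δ) ⬝ᵥ x s
            = ∑ j ∈ range δ, c0 j * (Matrix.vecMul η (A ^ j) ⬝ᵥ x s) := by
          intro s
          rw [← Matrix.dotProduct_mulVec, hc0]
          have : (∑ j ∈ range δ, c0 j • A ^ j).mulVec (x s)
              = ∑ j ∈ range δ, c0 j • (A ^ j).mulVec (x s) := by
            rw [sum_mulVec'_s16]
            exact Finset.sum_congr rfl fun j _ => Matrix.smul_mulVec _ _ _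
          rw [this, dotProduct_sum']
          refine Finset.sum_congr rfl fun j _ => ?_
          rw [dotProduct_smul, smul_eq_mul, Matrix.dotProduct_mulVec]
        have hPhiU : ∀ s, s + δ + L ≤ K →
            ∑ i ∈ range (δ + L), Φ i ⬝ᵥ u (s + i)
              = e (s + δ) - ∑ j ∈ range δ, c0 j * e (s + j) := by
          intro s hs
          have hδe := claim1 δ s hs
          rw [hext δ le_rfl s] at hδe
          have hje : ∑ j ∈ range δ, c0 j * e (s + j)
              = ∑ j ∈ range δ, (c0 j * (Matrix.vecMul η (A ^ j) ⬝ᵥ x s)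
                + c0 j * ∑ i ∈ range (δ + L), gco j i ⬝ᵥ u (s + i)) := by
            refine Finset.sum_congr rfl fun j hj => ?_
            simp only [Finset.mem_range] at hj
            rw [claim1 j s (by omega), hext j (by omega) s, mul_add]
          rw [hδe, hje, Finset.sum_add_distrib, hstate s]
          have hΦi : ∀ i, Φ i ⬝ᵥ u (s + i)
              = gco δ i ⬝ᵥ u (s + i) - ∑ j ∈ range δ, c0 j * (gco j i ⬝ᵥ u (s + i)) := by
            intro i
            simp only [hΦdef]
            rw [sub_dotProduct, sum_dotProduct']
            congr 1
            refine Finset.sum_congr rfl fun j _ => ?_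
            rw [smul_dotProduct, smul_eq_mul]
          rw [Finset.sum_congr rfl fun i _ => hΦi i, Finset.sum_sub_distrib]
          rw [Finset.sum_comm]
          simp only [Finset.mul_sum]
          ring
        have hΦ0 : ∀ i, i < δ + L → Φ i = 0 := by
          have hz0 : ∀ c : ℕ, c + (δ + L) ≤ T →
              ∑ k : Fin (δ + L), (fun k : Fin (δ + L) => Φ (k : ℕ)) k ⬝ᵥ u (c + k) = 0 := by
            intro c hc
            rw [Fin.sum_univ_eq_sum_range (fun i => Φ i ⬝ᵥ u (c + i)) (δ + L)]
            rw [hPhiU c (by omega)]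
            rw [he0 (c + δ) (by omega), Finset.sum_eq_zero fun j hj => by
              simp only [Finset.mem_range] at hj
              rw [he0 (c + j) (by omega), mul_zero]]
            ring
          have h := hpe _ hz0
          intro i hi
          exact congrFun h ⟨i, hi⟩
        have hrec : ∀ s, s + δ + L ≤ K →
            e (s + δ) = ∑ j ∈ range δ, c0 j * e (s + j) := by
          intro s hs
          have h := hPhiU s hs
          rw [Finset.sum_eq_zero fun i hi => by
            simp only [Finset.mem_range] at hi
            rw [hΦ0 i hi, zero_dotProduct]] at h
          linarith
        have hall : ∀ s, s + L ≤ K → e s = 0 := by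
          intro s
          induction s using Nat.strong_induction_on with
          | _ s ih =>
            intro hs
            by_cases hsT : s ≤ T - L
            · exact he0 s hsT
            · have h1 : s = (s - δ) + δ := by omega
              rw [h1, hrec (s - δ) (by omega)]
              refine Finset.sum_eq_zero fun j hj => ?_
              simp only [Finset.mem_range] at hj
              rw [ih (s - δ + j) (by omega) (by omega), mul_zero]
        rw [real_inner_comm]
        exact (hinner t).trans (hall t ht)
      obtain ⟨g, hg⟩ := (Submodule.mem_span_range_iff_exists_fun ℝ).mp hmem
      refine ⟨g, ?_, ?_⟩
      · intro a
        have h := congrArg (fun f : EuclideanSpace ℝ ((Fin n) ⊕ (Fin L × Fin m)) =>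
          f (Sum.inl a)) hg
        simp only at h
        rw [show x t a = w (Sum.inl a) from rfl, ← h, WithLp.ofLp_sum, Finset.sum_apply]
        exact Finset.sum_congr rfl fun c _ => by simp [hv_def, hvf_def]
      · intro k j
        have h := congrArg (fun f : EuclideanSpace ℝ ((Fin n) ⊕ (Fin L × Fin m)) =>
          f (Sum.inr (k, j))) hg
        simp only at h
        rw [show u (t + (k : ℕ)) j = w (Sum.inr (k, j)) from rfl, ← h, WithLp.ofLp_sum, Finset.sum_apply]
        exact Finset.sum_congr rfl fun c _ => by simp [hv_def, hvf_def]
    obtain ⟨g, hgx, hgu⟩ := key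
    have hgu' : ∀ k : ℕ, k < L →
        u (t + k) = ∑ c : Fin (T - L + 1), g c • u ((c : ℕ) + k) := by
      intro k hk
      funext j
      have h := hgu ⟨k, hk⟩ j
      simpa [Finset.sum_apply] using h
    have hgx' : ∀ k : ℕ, k < L →
        x (t + k) = ∑ c : Fin (T - L + 1), g c • x ((c : ℕ) + k) := by
      intro k
      induction k with
      | zero =>
        intro _
        funext a
        simpa [Finset.sum_apply] using hgx a
      | succ k ih =>
        intro hk
        have hk' : k < L := by omega
        have e1 : x (t + (k + 1)) = A.mulVec (x (t + k)) + B.mulVec (u (t + k)) := by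
          rw [show t + (k + 1) = (t + k) + 1 by omega]
          exact hx (t + k) (by omega)
        have e2 : ∀ c : Fin (T - L + 1),
            x ((c : ℕ) + (k + 1)) = A.mulVec (x ((c : ℕ) + k)) + B.mulVec (u ((c : ℕ) + k)) := by
          intro c
          rw [show (c : ℕ) + (k + 1) = ((c : ℕ) + k) + 1 by omega]
          exact hx _ (by have := hNle c; omega)
        rw [e1, ih hk', hgu' k hk', comb_step]
        exact (Finset.sum_congr rfl fun c _ => by rw [e2 c]).symm
    refine ⟨g, fun k => hgu' k k.isLt, fun k => ?_⟩
    have h1 : y (t + (k : ℕ)) = C.mulVec (x (t + (k : ℕ))) + D.mulVec (u (t + (k : ℕ))) :=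
      hy _ (by have := k.isLt; omega)
    have h2 : ∀ c : Fin (T - L + 1),
        y ((c : ℕ) + (k : ℕ)) = C.mulVec (x ((c : ℕ) + (k : ℕ))) + D.mulVec (u ((c : ℕ) + (k : ℕ))) :=
      fun c => hy _ (by have := hNle c; have := k.isLt; omega)
    rw [h1, hgx' k k.isLt, hgu' k k.isLt, comb_step]
    exact (Finset.sum_congr rfl fun c _ => by rw [h2 c]).symm
  · -- PART 2
    intro ubar ybar g hu hyb
    refine ⟨fun s => ∑ c : Fin (T - L + 1), g c • x ((c : ℕ) + s), ?_, ?_⟩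
    · intro s hs
      have hus : ubar s = ∑ c : Fin (T - L + 1), g c • u ((c : ℕ) + s) := by
        have h := hu ⟨s, by omega⟩
        simpa using h
      have e2 : ∀ c : Fin (T - L + 1),
          x ((c : ℕ) + (s + 1)) = A.mulVec (x ((c : ℕ) + s)) + B.mulVec (u ((c : ℕ) + s)) := by
        intro c
        rw [show (c : ℕ) + (s + 1) = ((c : ℕ) + s) + 1 by omega]
        exact hx _ (by have := hNle c; omega)
      show (∑ c : Fin (T - L + 1), g c • x ((c : ℕ) + (s + 1))) = _
      rw [hus, comb_step]
      exact Finset.sum_congr rfl fun c _ => by rw [e2 c]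
    · intro s hs
      have hus : ubar s = ∑ c : Fin (T - L + 1), g c • u ((c : ℕ) + s) := by
        have h := hu ⟨s, hs⟩
        simpa using h
      have hys : ybar s = ∑ c : Fin (T - L + 1), g c • y ((c : ℕ) + s) := by
        have h := hyb ⟨s, hs⟩
        simpa using h
      have e2 : ∀ c : Fin (T - L + 1),
          y ((c : ℕ) + s) = C.mulVec (x ((c : ℕ) + s)) + D.mulVec (u ((c : ℕ) + s)) :=
        fun c => hy _ (by have := hNle c; omega)
      rw [hys, hus, comb_step]
      exact Finset.sum_congr rfl fun c _ => by rw [e2 c]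
end
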